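/- arXiv:1610.03896 — 9 statements merged into one kernel-verified Lean document; each statement's English description precedes it below -/
import Mathlib

section
/- Fix an integer n ≥ 3. There exists a torsion-free subgroup G of finite index in SL(n,ℤ) such that for every non-trivial finite group F with 4(|F|+2) ≤ n there is a group chain 𝒢_F = {G_ℓ}_{ℓ≥0} in G (with G_0 = G) satisfying: (1) for every k ≥ 0, the discriminant group D^k = lim←_{ℓ≥k} G_ℓ/E_{k,ℓ} of the truncated chain {G_ℓ}_{ℓ≥k} is isomorphic to F (so the chain is stable with constant discriminant group F, and in particular is non-trivial at every level, hence the chain is irregular and not weakly normal); and (2) for every sequence (g_ℓ)_{ℓ≥0} in G satisfying the compatibility condition g_{ℓ+1}G_ℓ = g_ℓG_ℓ for all ℓ ≥ 0, the kernel of the conjugate chain, ⋂_{ℓ≥0} g_ℓ G_ℓ g_ℓ^{-1}, is the trivial subgroup. -/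
/-!
Molino theory for matchbox manifolds (Dyer–Hurder–Lukina), Theorem 1.5:
for `n ≥ 3` there is a finite-index torsion-free subgroup `G ⊆ SL(n,ℤ)` such that
for every non-trivial finite group `F` with `4(|F|+2) ≤ n` there is a group chain
`𝒢_F` in `G` whose truncated discriminant groups are all isomorphic to `F`
(so the chain is stable with constant discriminant group `F`), and every
conjugate of the chain by a compatible sequence has trivial kernel.
-/

section ChainMachinery

variable {Γ : Type*} [Group Γ]

/-- The conjugate subgroup `g K g⁻¹`. -/
def conjSub (g : Γ) (K : Subgroup Γ) : Subgroup Γ :=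
  K.map (MulAut.conj g).toMonoidHom

theorem mem_conjSub {g x : Γ} {K : Subgroup Γ} :
    x ∈ conjSub g K ↔ g⁻¹ * x * g ∈ K := by
  simp only [conjSub, Subgroup.mem_map, MulEquiv.coe_toMonoidHom, MulAut.conj_apply]
  constructor
  · rintro ⟨k, hk, rfl⟩
    have h : g⁻¹ * (g * k * g⁻¹) * g = k := by group
    rwa [h]
  · intro h
    exact ⟨g⁻¹ * x * g, h, by group⟩

/-- The core `⋂_{h ∈ H} h K h⁻¹` of `K` relative to a subgroup `H`;
for a group chain `{G_ℓ}` the subgroup `E_{n,ℓ} = coreIn (G n) (G ℓ)`. -/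
def coreIn (H K : Subgroup Γ) : Subgroup Γ :=
  ⨅ h : H, conjSub (h : Γ) K

theorem mem_coreIn {H K : Subgroup Γ} {x : Γ} :
    x ∈ coreIn H K ↔ ∀ h ∈ H, h⁻¹ * x * h ∈ K := by
  simp only [coreIn, Subgroup.mem_iInf, mem_conjSub, Subtype.forall]

theorem coreIn_mono {H K K' : Subgroup Γ} (h : K ≤ K') :
    coreIn H K ≤ coreIn H K' := fun x hx =>
  mem_coreIn.mpr fun g hg => h (mem_coreIn.mp hx g hg)

instance coreIn_subgroupOf_normal (H K : Subgroup Γ) :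
    ((coreIn H K).subgroupOf H).Normal := by
  constructor
  intro x hx g
  rw [Subgroup.mem_subgroupOf] at hx ⊢
  rw [mem_coreIn] at hx ⊢
  intro h hh
  have key := hx ((g : Γ)⁻¹ * h) (H.mul_mem (H.inv_mem g.2) hh)
  have e : ((g : Γ)⁻¹ * h)⁻¹ * (x : Γ) * ((g : Γ)⁻¹ * h)
      = h⁻¹ * ((g : Γ) * (x : Γ) * (g : Γ)⁻¹) * h := by group
  rw [e] at key
  simpa using key

/-- The quotient `G_n / E_{n,ℓ}` where `E_{n,ℓ}` is the core of `G_ℓ` in `G_n`. -/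
abbrev Qgrp (G : ℕ → Subgroup Γ) (n ℓ : ℕ) :=
  ↥(G n) ⧸ (coreIn (G n) (G ℓ)).subgroupOf (G n)

/-- The image of `G_ℓ` in the quotient `G_n / E_{n,ℓ}`. -/
def imgSub (G : ℕ → Subgroup Γ) (n ℓ : ℕ) : Subgroup (Qgrp G n ℓ) :=
  Subgroup.map (QuotientGroup.mk' _) ((G ℓ).subgroupOf (G n))

/-- The bonding homomorphism `G_n/E_{n,ℓ+1} → G_n/E_{n,ℓ}`. -/
def bond (G : ℕ → Subgroup Γ) (hG : ∀ ℓ, G (ℓ + 1) ≤ G ℓ) (n ℓ : ℕ) :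
    Qgrp G n (ℓ + 1) →* Qgrp G n ℓ :=
  QuotientGroup.map _ _ (MonoidHom.id _) (by
    intro x hx
    rw [Subgroup.mem_comap]
    rw [Subgroup.mem_subgroupOf] at hx ⊢
    exact coreIn_mono (hG ℓ) hx)

/-- The discriminant group of the truncated group chain `{G_ℓ}_{ℓ ≥ n}`:
the inverse limit `lim←_{ℓ ≥ n} G_ℓ/E_{n,ℓ}`, realized as the subgroup of the product
`Π_ℓ G_n/E_{n,n+ℓ}` consisting of bonding-compatible sequences of cosets of
elements of `G_{n+ℓ}`. -/
def Disc (G : ℕ → Subgroup Γ) (hG : ∀ ℓ, G (ℓ + 1) ≤ G ℓ) (n : ℕ) :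
    Subgroup (∀ ℓ : ℕ, Qgrp G n (n + ℓ)) where
  carrier := { x | (∀ ℓ, x ℓ ∈ imgSub G n (n + ℓ)) ∧
    ∀ ℓ, bond G hG n (n + ℓ) (x (ℓ + 1)) = x ℓ }
  one_mem' := ⟨fun ℓ => (imgSub G n (n + ℓ)).one_mem,
    fun ℓ => by simpa using map_one (bond G hG n (n + ℓ))⟩
  mul_mem' := by
    intro x y hx hy
    obtain ⟨hx1, hx2⟩ := hx
    obtain ⟨hy1, hy2⟩ := hy
    refine ⟨fun ℓ => (imgSub G n (n + ℓ)).mul_mem (hx1 ℓ) (hy1 ℓ), fun ℓ => ?_⟩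
    simp only [Pi.mul_apply, map_mul]
    rw [hx2 ℓ, hy2 ℓ]
  inv_mem' := by
    intro x hx
    obtain ⟨hx1, hx2⟩ := hx
    refine ⟨fun ℓ => (imgSub G n (n + ℓ)).inv_mem (hx1 ℓ), fun ℓ => ?_⟩
    simp only [Pi.inv_apply, map_inv]
    rw [hx2 ℓ]

end ChainMachinery

/-- A monoid is torsion-free if no element other than `1` has finite order
(the definition `Monoid.IsTorsionFree` of the older Mathlib, since removed). -/
def Monoid.IsTorsionFree (G : Type*) [Monoid G] : Prop :=
  ∀ g : G, g ≠ 1 → ¬IsOfFinOrder g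


set_option linter.unusedSectionVars false
set_option linter.unusedVariables false
set_option linter.unusedTactic false
set_option linter.unnecessarySimpa false
set_option maxHeartbeats 1000000

open Matrix Equiv

namespace DHL

/-- An integer divisible by arbitrarily high powers of `b ≥ 2` is zero. -/
lemma int_eq_zero_of_forall_pow_dvd (b : ℕ) (hb : 2 ≤ b) (c : ℤ)
    (h : ∀ L : ℕ, (b : ℤ) ^ L ∣ c) : c = 0 := by
  by_contra hc
  set L := c.natAbs with hL
  have h1 : (b : ℤ) ^ L ∣ |c| := (dvd_abs _ _).mpr (h L)
  have h2 : (b : ℤ) ^ L ≤ |c| := Int.le_of_dvd (abs_pos.mpr hc) h1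
  have h3 : (L : ℤ) < (b : ℤ) ^ L := by
    have := Nat.lt_pow_self (n := L) hb
    exact_mod_cast this
  have h4 : |c| = (L : ℤ) := by
    rw [hL, Int.abs_eq_natAbs]
  omega

/-- permutation matrix, with convention `(permM σ) i j = if i = σ j then 1 else 0`,
so column `j` is `e_{σ j}`. -/
def permM {ι : Type*} [DecidableEq ι] (R : Type*) [CommRing R] (σ : Equiv.Perm ι) :
    Matrix ι ι R :=
  Matrix.of fun i j => if i = σ j then 1 else 0

variable {ι : Type*} [DecidableEq ι] [Fintype ι] {R : Type*} [CommRing R]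

lemma permM_apply (σ : Perm ι) (i j : ι) :
    permM R σ i j = if i = σ j then 1 else 0 := rfl

lemma permM_one : permM R (1 : Perm ι) = 1 := by
  ext i j
  simp [permM_apply, Matrix.one_apply, eq_comm]
  rfl

lemma permM_mul (σ τ : Perm ι) : permM R (σ * τ) = permM R σ * permM R τ := by
  ext i j
  rw [Matrix.mul_apply]
  rw [Finset.sum_eq_single (τ j)]
  · simp [permM_apply, Equiv.Perm.mul_apply]; rfl
  · intro k _ hk
    simp [permM_apply, hk]
  · simp

lemma permM_transpose_eq (σ : Perm ι) : permM R σ = (σ.permMatrix R)ᵀ := by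
  ext i j
  simp [permM_apply, Matrix.transpose_apply, Equiv.Perm.permMatrix, PEquiv.toMatrix_apply,
    Equiv.toPEquiv_apply, eq_comm]

lemma det_permM (σ : Perm ι) : (permM R σ).det = ((Equiv.Perm.sign σ : ℤ) : R) := by
  rw [permM_transpose_eq, Matrix.det_transpose, Matrix.det_permutation]

lemma permM_map {S : Type*} [CommRing S] (φ : R →+* S) (σ : Perm ι) :
    (permM R σ).map φ = permM S σ := by
  ext i j
  simp only [Matrix.map_apply, permM_apply]
  split <;> simp

lemma permM_injective [Nontrivial R] : Function.Injective (permM R : Perm ι → Matrix ι ι R) := by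
  intro σ τ h
  ext j
  have := congrFun (congrFun h (σ j)) j
  simp only [permM_apply, if_pos rfl] at this
  by_contra hne
  rw [if_neg hne] at this
  exact one_ne_zero this


section B

variable (n : ℕ)

abbrev SLZ := Matrix.SpecialLinearGroup (Fin n) ℤ

/-- reduction mod `m`. -/
def red (m : ℕ) : SLZ n →* Matrix.SpecialLinearGroup (Fin n) (ZMod m) :=
  Matrix.SpecialLinearGroup.map (Int.castRingHom (ZMod m))

lemma red_coe (m : ℕ) (g : SLZ n) (i j : Fin n) :
    (red n m g : Matrix (Fin n) (Fin n) (ZMod m)) i j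
      = (((g : Matrix (Fin n) (Fin n) ℤ) i j : ℤ) : ZMod m) := rfl

lemma red_dvd {a b : ℕ} (h : a ∣ b) (g : SLZ n) :
    Matrix.SpecialLinearGroup.map (ZMod.castHom h (ZMod a)) (red n b g) = red n a g := by
  ext i j
  have : (ZMod.castHom h (ZMod a)).comp (Int.castRingHom (ZMod b)) = Int.castRingHom (ZMod a) :=
    Subsingleton.elim _ _
  exact RingHom.congr_fun this _

def Γ3 : Subgroup (SLZ n) := (red n 3).ker

lemma mem_Γ3 {g : SLZ n} : g ∈ Γ3 n ↔ red n 3 g = 1 := MonoidHom.mem_ker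

lemma red3_of_mem {g : SLZ n} (h : g ∈ Γ3 n) : red n 3 g = 1 := MonoidHom.mem_ker.mp h

instance : (Γ3 n).FiniteIndex := Subgroup.finiteIndex_ker _

/-- generic ring lemma: `(1+M)^p = 1 + p•M + M²·D`. -/
lemma one_add_pow {A : Type*} [Ring A] (M : A) (p : ℕ) :
    ∃ D : A, (1 + M) ^ p = 1 + p • M + M * M * D := by
  induction p with
  | zero => exact ⟨0, by simp⟩
  | succ p ih =>
    obtain ⟨D, hD⟩ := ih
    refine ⟨D + D * M + p • 1, ?_⟩
    rw [pow_succ, hD]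
    simp only [mul_add, add_mul, mul_one, one_mul, succ_nsmul, smul_mul_assoc, mul_smul_comm,
      mul_assoc]
    abel

lemma cube_expand {A : Type*} [Ring A] (M : A) :
    (1 + M) ^ 3 = 1 + 3 • M + 3 • (M * M) + M * M * M := by
  rw [pow_succ, pow_succ, pow_one]
  simp only [mul_add, add_mul, mul_one, one_mul, succ_nsmul, smul_mul_assoc, mul_smul_comm,
    mul_assoc]
  abel

lemma dvd_three_of_unipotent_pow (p : ℕ) (hp : p.Prime) (k : ℕ) (hk : 1 ≤ k)
    (C : Matrix (Fin n) (Fin n) ℤ) (h : (1 + (3:ℤ)^k • C) ^ p = 1) (i j : Fin n) :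
    (3:ℤ) ∣ C i j := by
  obtain ⟨k', rfl⟩ : ∃ k', k = k' + 1 := ⟨k - 1, by omega⟩
  set M : Matrix (Fin n) (Fin n) ℤ := (3:ℤ)^(k'+1) • C with hM
  have hMM : M * M = ((3:ℤ)^(k'+1) * 3^(k'+1)) • (C * C) := by
    rw [hM, smul_mul_smul_comm]
  have hMMM : M * M * M = ((3:ℤ)^(k'+1) * 3^(k'+1) * 3^(k'+1)) • (C * C * C) := by
    rw [hMM, hM, smul_mul_smul_comm]
  by_cases hp3 : p = 3
  · subst hp3
    rw [cube_expand] at h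
    have hz : 3 • M + 3 • (M * M) + M * M * M = 0 := by
      rw [add_assoc, add_assoc, ← add_assoc (3•M)] at h
      nth_rewrite 2 [show (1 : Matrix (Fin n) (Fin n) ℤ) = 1 + 0 by rw [add_zero]] at h
      exact add_left_cancel h
    have hentry := congrFun (congrFun hz i) j
    rw [Matrix.add_apply, Matrix.add_apply, Matrix.smul_apply, Matrix.smul_apply,
      hMMM, hMM, Matrix.smul_apply, Matrix.smul_apply, hM, Matrix.smul_apply,
      Matrix.zero_apply] at hentry
    simp only [smul_eq_mul, nsmul_eq_mul, Nat.cast_ofNat] at hentry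
    have hfac : (3:ℤ)^(k'+2) *
        (C i j + 3^(k'+1) * (C*C) i j + 3^(2*k'+1) * (C*C*C) i j) = 0 := by
      linear_combination hentry
    have hz2 : C i j + 3^(k'+1) * (C*C) i j + 3^(2*k'+1) * (C*C*C) i j = 0 := by
      have h3 : ((3:ℤ)^(k'+2)) ≠ 0 := by positivity
      exact (mul_eq_zero.mp hfac).resolve_left h3
    have : C i j = -(3^(k'+1) * (C*C) i j) - 3^(2*k'+1) * (C*C*C) i j := by linarith
    rw [this]
    refine dvd_sub (dvd_neg.mpr ?_) ?_
    · exact Dvd.dvd.mul_right (dvd_pow_self 3 (Nat.succ_ne_zero k')) _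
    · exact Dvd.dvd.mul_right (dvd_pow_self 3 (by omega)) _
  · obtain ⟨D, hD⟩ := one_add_pow M p
    rw [hD] at h
    have hz : p • M + M * M * D = 0 := by
      rw [add_assoc] at h
      nth_rewrite 2 [show (1 : Matrix (Fin n) (Fin n) ℤ) = 1 + 0 by rw [add_zero]] at h
      exact add_left_cancel h
    have hMMD : M * M * D = ((3:ℤ)^(k'+1) * 3^(k'+1)) • (C * C * D) := by
      rw [hMM, smul_mul_assoc]
    have hentry := congrFun (congrFun hz i) j
    rw [Matrix.add_apply, Matrix.smul_apply, hMMD, Matrix.smul_apply, hM, Matrix.smul_apply,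
      Matrix.zero_apply] at hentry
    simp only [smul_eq_mul, nsmul_eq_mul] at hentry
    have hfac : (3:ℤ)^(k'+1) * ((p:ℤ) * C i j + 3^(k'+1) * (C*C*D) i j) = 0 := by
      linear_combination hentry
    have hz2 : (p:ℤ) * C i j + 3^(k'+1) * (C*C*D) i j = 0 := by
      have h3 : ((3:ℤ)^(k'+1)) ≠ 0 := by positivity
      exact (mul_eq_zero.mp hfac).resolve_left h3
    have h3p : (3:ℤ) ∣ (p:ℤ) * C i j := by
      have : (p:ℤ) * C i j = -(3^(k'+1) * (C*C*D) i j) := by linarith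
      rw [this]
      exact dvd_neg.mpr (Dvd.dvd.mul_right (dvd_pow_self 3 (Nat.succ_ne_zero k')) _)
    rcases (Int.Prime.dvd_mul' Nat.prime_three h3p) with hc | hc
    · exfalso
      have : (3:ℕ) ∣ p := by exact_mod_cast hc
      exact hp3 ((Nat.prime_dvd_prime_iff_eq Nat.prime_three hp).mp this).symm
    · exact hc

lemma eq_one_of_prime_pow_eq_one (y : SLZ n) (hy : y ∈ Γ3 n) (p : ℕ) (hp : p.Prime)
    (h : y ^ p = 1) : y = 1 := by
  have base : ∀ i j, (3:ℤ)^1 ∣ ((y : Matrix (Fin n) (Fin n) ℤ) - 1) i j := by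
    intro i j
    rw [mem_Γ3] at hy
    have := congrFun (congrFun (congrArg (Subtype.val) hy) i) j
    rw [red_coe] at this
    have h1 : (((y : Matrix (Fin n) (Fin n) ℤ) i j : ℤ) : ZMod 3)
        = (((1 : Matrix (Fin n) (Fin n) ℤ) i j : ℤ) : ZMod 3) := by
      rw [this]
      rcases eq_or_ne i j with rfl | hij
      · simp [Matrix.one_apply]
      · simp [Matrix.one_apply, hij]
    have h2 : (((((y : Matrix (Fin n) (Fin n) ℤ) - 1) i j : ℤ)) : ZMod 3) = 0 := by
      rw [Matrix.sub_apply]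
      push_cast
      rw [h1]
      ring
    rw [pow_one]
    exact_mod_cast (ZMod.intCast_zmod_eq_zero_iff_dvd _ 3).mp h2
  have hcoepow : ∀ q : ℕ, ((y ^ q : SLZ n) : Matrix (Fin n) (Fin n) ℤ)
      = (y : Matrix (Fin n) (Fin n) ℤ) ^ q := fun q => by
    simp
  have step : ∀ k, 1 ≤ k → (∀ i j, (3:ℤ)^k ∣ ((y:Matrix (Fin n) (Fin n) ℤ) - 1) i j)
      → (∀ i j, (3:ℤ)^(k+1) ∣ ((y:Matrix (Fin n) (Fin n) ℤ) - 1) i j) := by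
    intro k hk hdvd i j
    set C : Matrix (Fin n) (Fin n) ℤ :=
      Matrix.of fun i j => ((y:Matrix (Fin n) (Fin n) ℤ) - 1) i j / 3^k with hC
    have hCe : ∀ a b, ((y:Matrix (Fin n) (Fin n) ℤ) - 1) a b = 3^k * C a b := fun a b =>
      (Int.mul_ediv_cancel' (hdvd a b)).symm
    have hyC : (y : Matrix (Fin n) (Fin n) ℤ) = 1 + (3:ℤ)^k • C := by
      ext a b
      have := hCe a b
      rw [Matrix.sub_apply] at this
      rw [Matrix.add_apply, Matrix.smul_apply]
      rw [smul_eq_mul]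
      linarith
    have hpow : (1 + (3:ℤ)^k • C) ^ p = 1 := by
      rw [← hyC, ← hcoepow]
      rw [h]
      simp
    have h3C := dvd_three_of_unipotent_pow n p hp k hk C hpow i j
    rw [hCe i j, pow_succ]
    exact mul_dvd_mul_left _ h3C
  have all : ∀ k, ∀ i j, (3:ℤ)^(k+1) ∣ ((y:Matrix (Fin n) (Fin n) ℤ) - 1) i j := by
    intro k
    induction k with
    | zero => exact base
    | succ k ih => exact step (k+1) (by omega) ih
  have hzero : ∀ i j, ((y:Matrix (Fin n) (Fin n) ℤ) - 1) i j = 0 := by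
    intro i j
    apply int_eq_zero_of_forall_pow_dvd 3 (by norm_num)
    intro L
    cases L with
    | zero => simp
    | succ L => exact_mod_cast all L i j
  ext i j
  have := hzero i j
  rw [Matrix.sub_apply] at this
  simp only [Matrix.SpecialLinearGroup.coe_one]
  linarith

lemma Γ3_torsionFree : Monoid.IsTorsionFree ↥(Γ3 n) := by
  intro g hg hfin
  set d := orderOf g with hd
  have hdpos : 0 < d := hfin.orderOf_pos
  have hd1 : d ≠ 1 := fun h => hg (orderOf_eq_one_iff.mp h)
  have hp : d.minFac.Prime := Nat.minFac_prime hd1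
  set p := d.minFac with hpdef
  have hdp : p ∣ d := Nat.minFac_dvd d
  set y : ↥(Γ3 n) := g ^ (d / p) with hy
  have h1 : y ^ p = 1 := by
    rw [hy, ← pow_mul, Nat.div_mul_cancel hdp, hd, pow_orderOf_eq_one]
  have h2 : ((y : SLZ n)) ^ p = 1 := by
    rw [← SubgroupClass.coe_pow, h1, OneMemClass.coe_one]
  have h3 : (y : SLZ n) = 1 := eq_one_of_prime_pow_eq_one n _ y.2 p hp h2
  have h4 : y = 1 := by
    exact_mod_cast Subtype.ext h3
  have h5 : d ∣ d / p := orderOf_dvd_of_pow_eq_one (by rw [← hy, h4])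
  have h6 : d / p < d := Nat.div_lt_self hdpos hp.one_lt
  have h7 : 0 < d / p := Nat.div_pos (Nat.minFac_le hdpos) hp.pos
  have h8 : d ≤ d / p := Nat.le_of_dvd h7 h5
  omega

end B
section C

variable {n : ℕ} (F : Type) [Group F] [Fintype F] [DecidableEq F] (ι : (F ⊕ F) ↪ Fin n)

def dblPerm (f : F) : Perm (F ⊕ F) := Equiv.sumCongr (Equiv.mulLeft f) (Equiv.mulLeft f)

lemma dblPerm_mul (f g : F) : dblPerm F (f * g) = dblPerm F f * dblPerm F g := by
  ext x
  cases x <;> simp [dblPerm, mul_assoc]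

noncomputable def sigma : F →* Perm (Fin n) :=
  (Equiv.Perm.viaEmbeddingHom ι).comp (MonoidHom.mk' (dblPerm F) (dblPerm_mul F))

lemma sigma_apply_inl (f x) : sigma F ι f (ι (Sum.inl x)) = ι (Sum.inl (f * x)) := by
  simp [sigma, Equiv.Perm.viaEmbeddingHom_apply, Equiv.Perm.viaEmbedding_apply, dblPerm]

lemma sigma_injective : Function.Injective (sigma F ι) := by
  intro f f' h
  have h2 := congrFun (congrArg (fun (e : Perm (Fin n)) => (e : Fin n → Fin n)) h) (ι (Sum.inl 1))
  simp only [sigma_apply_inl, mul_one] at h2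
  exact Sum.inl.inj (ι.injective h2)

lemma sign_sigma (f : F) : Equiv.Perm.sign (sigma F ι f) = 1 := by
  show Equiv.Perm.sign ((dblPerm F f).viaEmbedding ι) = 1
  unfold Equiv.Perm.viaEmbedding
  rw [Equiv.Perm.sign_extendDomain]
  unfold dblPerm
  rw [Equiv.Perm.sign_sumCongr]
  exact Int.units_mul_self _

noncomputable def rho (R : Type*) [CommRing R] : F →* Matrix.SpecialLinearGroup (Fin n) R where
  toFun f := ⟨permM R (sigma F ι f), by rw [det_permM, sign_sigma]; simp⟩
  map_one' := Subtype.ext (by show permM R _ = _; rw [_root_.map_one, permM_one]; rfl)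
  map_mul' f g := Subtype.ext (by show permM R _ = _; rw [_root_.map_mul, permM_mul]; rfl)

lemma rho_coe (R : Type*) [CommRing R] (f : F) :
    (rho F ι R f : Matrix (Fin n) (Fin n) R) = permM R (sigma F ι f) := rfl

lemma rho_injective (R : Type*) [CommRing R] [Nontrivial R] :
    Function.Injective (rho F ι R) := by
  intro f f' h
  exact sigma_injective F ι (permM_injective (congrArg Subtype.val h))

lemma map_rho {R S : Type*} [CommRing R] [CommRing S] (φ : R →+* S) (f : F) :
    Matrix.SpecialLinearGroup.map φ (rho F ι R f) = rho F ι S f :=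
  Subtype.ext (permM_map φ _)

/-- The group chain: `G_ℓ = {g ∈ Γ(3) : g mod 2^ℓ ∈ ρ(F)}`. -/
noncomputable def Gl (ℓ : ℕ) : Subgroup (SLZ n) :=
  Γ3 n ⊓ ((rho F ι (ZMod (2^ℓ))).range.comap (red n (2^ℓ)))

lemma mem_Gl {ℓ : ℕ} {g : SLZ n} :
    g ∈ Gl F ι ℓ ↔ g ∈ Γ3 n ∧ ∃ f, rho F ι (ZMod (2^ℓ)) f = red n (2^ℓ) g := by
  simp [Gl, Subgroup.mem_inf, Subgroup.mem_comap, MonoidHom.mem_range]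

lemma Gl_le_Γ3 (ℓ : ℕ) : Gl F ι ℓ ≤ Γ3 n := inf_le_left

lemma red_of_le {a b : ℕ} (hab : a ≤ b) (g : SLZ n) {f : F}
    (h : rho F ι (ZMod (2^b)) f = red n (2^b) g) :
    rho F ι (ZMod (2^a)) f = red n (2^a) g := by
  have hd : (2:ℕ)^a ∣ 2^b := pow_dvd_pow 2 hab
  rw [← red_dvd n hd g, ← h, map_rho]

lemma Gl_desc (ℓ : ℕ) : Gl F ι (ℓ+1) ≤ Gl F ι ℓ := by
  intro g hg
  rw [mem_Gl] at hg ⊢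
  obtain ⟨h3, f, hf⟩ := hg
  exact ⟨h3, f, red_of_le F ι (Nat.le_succ ℓ) g hf⟩

lemma Gl_mono {a b : ℕ} (hab : a ≤ b) : Gl F ι b ≤ Gl F ι a := by
  intro g hg
  rw [mem_Gl] at hg ⊢
  obtain ⟨h3, f, hf⟩ := hg
  exact ⟨h3, f, red_of_le F ι hab g hf⟩

lemma Gl_zero : Gl F ι 0 = Γ3 n := by
  apply le_antisymm (Gl_le_Γ3 F ι 0)
  intro g hg
  rw [mem_Gl]
  refine ⟨hg, 1, ?_⟩
  haveI : Subsingleton (Matrix (Fin n) (Fin n) (ZMod (2^0))) :=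
    inferInstanceAs (Subsingleton (Matrix (Fin n) (Fin n) (ZMod 1)))
  exact Subtype.ext (Subsingleton.elim _ _)

lemma Gl_finiteIndex (ℓ : ℕ) : ((Gl F ι ℓ).subgroupOf (Γ3 n)).FiniteIndex := by
  haveI : NeZero ((2:ℕ)^ℓ) := ⟨pow_ne_zero ℓ two_ne_zero⟩
  have hle : ((red n (2^ℓ)).comp (Γ3 n).subtype).ker ≤ (Gl F ι ℓ).subgroupOf (Γ3 n) := by
    intro x hx
    rw [MonoidHom.mem_ker, MonoidHom.comp_apply] at hx
    rw [Subgroup.mem_subgroupOf, mem_Gl]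
    refine ⟨x.2, 1, ?_⟩
    rw [_root_.map_one]
    exact hx.symm
  haveI := Subgroup.finiteIndex_ker ((red n (2^ℓ)).comp (Γ3 n).subtype)
  exact Subgroup.finiteIndex_of_le hle

end C

section Lift

variable {n : ℕ} {R : Type*} [CommRing R]


lemma std_neg (a b : Fin n) (c : R) :
    Matrix.single a b (-c) = -Matrix.single a b c := by
  ext i j
  simp only [Matrix.single, Matrix.of_apply, Matrix.neg_apply]
  split <;> simp

lemma Emul_ne {a b c d : Fin n} (h : b ≠ c) (x y : R) :
    Matrix.single a b x * Matrix.single c d y = 0 :=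
  Matrix.single_mul_single_of_ne _ _ _ _ h _

lemma Emul_eq {a b d : Fin n} (x y : R) :
    Matrix.single a b x * Matrix.single b d y
      = Matrix.single a d (x*y) :=
  Matrix.single_mul_single_same _ _ _ _ _

lemma entry_PE {a b : Fin n} (w : R) (M : Matrix (Fin n) (Fin n) R) (h : a ≠ b) :
    (M * Matrix.single a b w) a a = 0 :=
  Matrix.mul_single_apply_of_ne _ _ _ _ _ h M

lemma entry_EP {a b : Fin n} (w : R) (M : Matrix (Fin n) (Fin n) R) :
    (Matrix.single a b w * M) a a = w * M b a :=
  Matrix.single_mul_apply_same _ _ _ _ M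

/-- the rotation `e_a ↦ e_b ↦ -e_a` as product of three transvections. -/
def rotM (R : Type*) [CommRing R] (a b : Fin n) : Matrix (Fin n) (Fin n) R :=
  (1 + Matrix.single b a 1) * (1 + Matrix.single a b (-1)) *
    (1 + Matrix.single b a 1)

lemma rotM_eq (a b : Fin n) (h : a ≠ b) :
    rotM R a b = 1 - Matrix.single a a 1 - Matrix.single b b 1
      + Matrix.single b a 1 - Matrix.single a b 1 := by
  unfold rotM
  rw [std_neg]
  simp only [mul_add, add_mul, mul_one, one_mul, mul_neg, neg_mul, neg_neg,
    Emul_eq, Emul_ne h, Emul_ne h.symm, mul_one, neg_zero, add_zero, zero_add]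
  abel

def swapD (R : Type*) [CommRing R] (a b : Fin n) : Matrix (Fin n) (Fin n) R :=
  1 - Matrix.single a a 1 - Matrix.single b b 1
    + Matrix.single a b 1 + Matrix.single b a 1

lemma rot_sq (c d : Fin n) (h : c ≠ d) :
    rotM R c d * rotM R c d = 1 - (Matrix.single c c 1 + Matrix.single c c 1)
      - (Matrix.single d d 1 + Matrix.single d d 1) := by
  rw [rotM_eq c d h]
  simp only [mul_add, add_mul, mul_sub, sub_mul, mul_one, one_mul,
    Emul_eq, Emul_ne h, Emul_ne h.symm, mul_one, neg_zero, add_zero, zero_add,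
    sub_zero, zero_sub]
  abel

lemma rot4 (a1 b1 a2 b2 : Fin n) (h11 : a1 ≠ b1) (h22 : a2 ≠ b2)
    (h1a2 : a1 ≠ a2) (h1b2 : a1 ≠ b2) (hb1a2 : b1 ≠ a2) (hb1b2 : b1 ≠ b2) :
    rotM R a1 b1 * rotM R a2 b2 * (rotM R b1 b2 * rotM R b1 b2)
      = swapD R a1 b1 * swapD R a2 b2 := by
  rw [rot_sq b1 b2 hb1b2, rotM_eq a1 b1 h11, rotM_eq a2 b2 h22]
  unfold swapD
  simp only [mul_add, add_mul, mul_sub, sub_mul, mul_one, one_mul,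
    Emul_eq, Emul_ne h11, Emul_ne h11.symm, Emul_ne h22, Emul_ne h22.symm,
    Emul_ne h1a2, Emul_ne h1a2.symm, Emul_ne h1b2, Emul_ne h1b2.symm,
    Emul_ne hb1a2, Emul_ne hb1a2.symm, Emul_ne hb1b2, Emul_ne hb1b2.symm,
    mul_one, neg_zero, add_zero, zero_add, sub_zero, zero_sub, mul_zero, zero_mul]
  abel




variable {F : Type} [DecidableEq F]

lemma permM_swap (a b : Fin n) (h : a ≠ b) :
    permM R (Equiv.swap a b) = swapD R a b := by
  ext i j
  simp only [permM, Matrix.of_apply, swapD, Matrix.sub_apply, Matrix.add_apply,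
    Matrix.one_apply, Matrix.single, Matrix.of_apply]
  by_cases hja : j = a <;> by_cases hjb : j = b <;>
    by_cases hia : i = a <;> by_cases hib : i = b <;>
    simp_all [Equiv.swap_apply_def, eq_comm]

variable {F : Type} [DecidableEq F] (ι : (F ⊕ F) ↪ Fin n)

lemma viaEmbedding_swap (x y : F ⊕ F) :
    (Equiv.swap x y).viaEmbedding ι = Equiv.swap (ι x) (ι y) := by
  ext i
  by_cases hmem : i ∈ Set.range ι
  · obtain ⟨z, rfl⟩ := hmem
    rw [Equiv.Perm.viaEmbedding_apply, ι.injective.swap_apply]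
  · rw [Equiv.Perm.viaEmbedding_apply_of_notMem _ _ _ hmem,
      Equiv.swap_apply_of_ne_of_ne (fun hc => hmem ⟨x, hc.symm⟩) (fun hc => hmem ⟨y, hc.symm⟩)]

lemma sum_swap_eq (x y : F) :
    Equiv.sumCongr (Equiv.swap x y) (Equiv.swap x y)
      = Equiv.swap (Sum.inl x) (Sum.inl y) * Equiv.swap (Sum.inr x) (Sum.inr y) := by
  ext z
  cases z with
  | inl w =>
    have h1 : (Equiv.swap (Sum.inr x) (Sum.inr y)) (Sum.inl w : F ⊕ F) = Sum.inl w :=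
      Equiv.swap_apply_of_ne_of_ne (by simp) (by simp)
    have h2 : (Equiv.swap (Sum.inl x) (Sum.inl y)) (Sum.inl w : F ⊕ F)
        = Sum.inl (Equiv.swap x y w) := Sum.inl_injective.swap_apply x y w
    simp [Equiv.Perm.mul_apply, h1, h2]
  | inr w =>
    have h1 : (Equiv.swap (Sum.inr x) (Sum.inr y)) (Sum.inr w : F ⊕ F)
        = Sum.inr (Equiv.swap x y w) := Sum.inr_injective.swap_apply x y w
    have h2 : (Equiv.swap (Sum.inl x) (Sum.inl y)) (Sum.inr (Equiv.swap x y w) : F ⊕ F)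
        = Sum.inr (Equiv.swap x y w) :=
      Equiv.swap_apply_of_ne_of_ne (by simp) (by simp)
    simp [Equiv.Perm.mul_apply, h1, h2]


end Lift

section SLLift

variable {n : ℕ}

lemma map_one_add_std {R S : Type*} [CommRing R] [CommRing S] (φ : R →+* S) (a b : Fin n) (c : R) :
    (1 + Matrix.single a b c).map (φ : R → S) = 1 + Matrix.single a b (φ c) := by
  ext i j
  simp only [Matrix.map_apply, Matrix.add_apply, Matrix.one_apply, Matrix.single,
    Matrix.of_apply, apply_ite φ, map_add, _root_.map_one, map_zero]

def tvSL (a b : Fin n) (h : a ≠ b) (c : ℤ) : SLZ n :=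
  ⟨1 + Matrix.single a b c, by
    have he : (1 : Matrix (Fin n) (Fin n) ℤ) + Matrix.single a b c
        = Matrix.transvection a b c := by
      simp [Matrix.transvection, smul_single]
    rw [he, Matrix.det_transvection_of_ne a b h]⟩

lemma red_tvSL_coe (m : ℕ) (a b : Fin n) (h : a ≠ b) (c : ℤ) :
    ((red n m (tvSL a b h c)) : Matrix (Fin n) (Fin n) (ZMod m))
      = 1 + Matrix.single a b ((c : ℤ) : ZMod m) := by
  rw [red, Matrix.SpecialLinearGroup.map_apply_coe, RingHom.mapMatrix_apply]
  show ((1 + Matrix.single a b c).map ((Int.castRingHom (ZMod m)) : ℤ → ZMod m)) = _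
  rw [map_one_add_std]
  rfl

lemma red_tvSL_eq_one (m : ℕ) (a b : Fin n) (h : a ≠ b) (c : ℤ)
    (hc : ((c : ℤ) : ZMod m) = 0) : red n m (tvSL a b h c) = 1 := by
  apply Subtype.ext
  rw [red_tvSL_coe m a b h c, hc]
  simp

def rotSL (a b : Fin n) (h : a ≠ b) (t : ℤ) : SLZ n :=
  tvSL b a h.symm t * tvSL a b h (-t) * tvSL b a h.symm t

lemma red_rotSL_three (a b : Fin n) (h : a ≠ b) (t : ℤ) (ht : ((t:ℤ) : ZMod 3) = 0) :
    red n 3 (rotSL a b h t) = 1 := by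
  have hnt : ((-t : ℤ) : ZMod 3) = 0 := by push_cast; rw [ht]; ring
  rw [rotSL, _root_.map_mul, _root_.map_mul, red_tvSL_eq_one 3 b a h.symm t ht,
    red_tvSL_eq_one 3 a b h (-t) hnt]
  simp

lemma red_rotSL_coe (m : ℕ) (a b : Fin n) (h : a ≠ b) (t : ℤ)
    (ht : ((t:ℤ) : ZMod m) = 1) :
    ((red n m (rotSL a b h t)) : Matrix (Fin n) (Fin n) (ZMod m)) = rotM (ZMod m) a b := by
  have hnt : ((-t : ℤ) : ZMod m) = -1 := by push_cast; rw [ht]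
  rw [rotSL, _root_.map_mul, _root_.map_mul, Matrix.SpecialLinearGroup.coe_mul,
    Matrix.SpecialLinearGroup.coe_mul, red_tvSL_coe, red_tvSL_coe m a b h (-t), ht, hnt, rotM]

lemma exists_t (L : ℕ) : ∃ t : ℤ, ((t:ℤ) : ZMod 3) = 0 ∧ ((t:ℤ) : ZMod (2^L)) = 1 := by
  have hcop : IsCoprime (3 : ℤ) ((2:ℤ)^L) := by
    apply IsCoprime.pow_right
    norm_num
  obtain ⟨u, v, huv⟩ := hcop
  refine ⟨u * 3, ?_, ?_⟩
  · have h3 : (3 : ZMod 3) = 0 := by decide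
    push_cast
    rw [h3]
    ring
  · have : u * 3 = 1 - v * 2^L := by linarith
    rw [this]
    push_cast
    have h2 : ((2:ℤ)^L : ZMod (2^L)) = 0 := by
      have := ZMod.natCast_self (2^L)
      push_cast at this ⊢
      exact_mod_cast this
    push_cast at h2
    rw [h2]
    ring

end SLLift

section LiftMain

variable {n : ℕ} (F : Type) [Group F] [Fintype F] [DecidableEq F] (ι : (F ⊕ F) ↪ Fin n)

lemma lift_swaps (L : ℕ) (t : ℤ) (ht3 : ((t:ℤ) : ZMod 3) = 0) (ht2 : ((t:ℤ) : ZMod (2^L)) = 1)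
    (l : List (Equiv.Perm F)) (hl : ∀ g ∈ l, g.IsSwap) :
    ∃ γ : SLZ n, γ ∈ Γ3 n ∧
      ((red n (2^L) γ : Matrix (Fin n) (Fin n) (ZMod (2^L)))
        = permM (ZMod (2^L)) (Equiv.Perm.viaEmbedding (Equiv.sumCongr l.prod l.prod) ι)) := by
  induction l with
  | nil =>
    refine ⟨1, (Γ3 n).one_mem, ?_⟩
    rw [_root_.map_one]
    have h1 : (List.prod ([] : List (Equiv.Perm F))) = 1 := rfl
    have h1' : Equiv.sumCongr (1 : Equiv.Perm F) (1 : Equiv.Perm F) = (1 : Equiv.Perm (F ⊕ F)) :=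
      Equiv.Perm.sumCongr_one
    rw [h1, h1']
    have h2 : (Equiv.Perm.viaEmbedding (1 : Equiv.Perm (F ⊕ F)) ι) = 1 :=
      _root_.map_one (Equiv.Perm.viaEmbeddingHom ι)
    rw [h2, permM_one]
    rfl
  | cons g l ih =>
    obtain ⟨γl, hγl3, hγl2⟩ := ih (fun g hg => hl g (List.mem_cons_of_mem _ hg))
    obtain ⟨x, y, hxy, rfl⟩ := hl g List.mem_cons_self
    set a1 := ι (Sum.inl x) with ha1
    set b1 := ι (Sum.inl y) with hb1
    set a2 := ι (Sum.inr x) with ha2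
    set b2 := ι (Sum.inr y) with hb2
    have h11 : a1 ≠ b1 := fun hc => hxy (Sum.inl.inj (ι.injective hc))
    have h22 : a2 ≠ b2 := fun hc => hxy (Sum.inr.inj (ι.injective hc))
    have h1a2 : a1 ≠ a2 := fun hc => Sum.inl_ne_inr (ι.injective hc)
    have h1b2 : a1 ≠ b2 := fun hc => Sum.inl_ne_inr (ι.injective hc)
    have hb1a2 : b1 ≠ a2 := fun hc => Sum.inl_ne_inr (ι.injective hc)
    have hb1b2 : b1 ≠ b2 := fun hc => Sum.inl_ne_inr (ι.injective hc)
    refine ⟨rotSL a1 b1 h11 t * rotSL a2 b2 h22 t *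
      (rotSL b1 b2 hb1b2 t * rotSL b1 b2 hb1b2 t) * γl, ?_, ?_⟩
    · apply (Γ3 n).mul_mem _ hγl3
      rw [mem_Γ3, _root_.map_mul, _root_.map_mul, _root_.map_mul,
        red_rotSL_three a1 b1 h11 t ht3, red_rotSL_three a2 b2 h22 t ht3,
        red_rotSL_three b1 b2 hb1b2 t ht3]
      simp
    · have hvia : ∀ σ τ : Equiv.Perm (F ⊕ F), Equiv.Perm.viaEmbedding (σ * τ) ι
          = Equiv.Perm.viaEmbedding σ ι * Equiv.Perm.viaEmbedding τ ι := fun σ τ =>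
        _root_.map_mul (Equiv.Perm.viaEmbeddingHom ι) σ τ
      have hrot : ((red n (2^L) (rotSL a1 b1 h11 t * rotSL a2 b2 h22 t *
          (rotSL b1 b2 hb1b2 t * rotSL b1 b2 hb1b2 t)) : Matrix (Fin n) (Fin n) (ZMod (2^L))))
          = permM (ZMod (2^L)) (Equiv.Perm.viaEmbedding
              (Equiv.sumCongr (Equiv.swap x y) (Equiv.swap x y)) ι) := by
        rw [_root_.map_mul, Matrix.SpecialLinearGroup.coe_mul, _root_.map_mul,
          Matrix.SpecialLinearGroup.coe_mul, _root_.map_mul, Matrix.SpecialLinearGroup.coe_mul]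
        rw [red_rotSL_coe (2^L) a1 b1 h11 t ht2, red_rotSL_coe (2^L) a2 b2 h22 t ht2,
          red_rotSL_coe (2^L) b1 b2 hb1b2 t ht2]
        rw [rot4 a1 b1 a2 b2 h11 h22 h1a2 h1b2 hb1a2 hb1b2]
        rw [← permM_swap a1 b1 h11, ← permM_swap a2 b2 h22, ← permM_mul]
        rw [sum_swap_eq x y, hvia, viaEmbedding_swap, viaEmbedding_swap]
      rw [_root_.map_mul, Matrix.SpecialLinearGroup.coe_mul, hrot, hγl2, ← permM_mul]
      congr 1
      rw [List.prod_cons]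
      have hsc : Equiv.sumCongr (Equiv.swap x y * l.prod) (Equiv.swap x y * l.prod)
          = Equiv.sumCongr (Equiv.swap x y) (Equiv.swap x y)
            * Equiv.sumCongr l.prod l.prod := (Equiv.Perm.sumCongr_mul _ _ _ _).symm
      rw [hsc, hvia]

lemma lift_exists (L : ℕ) (f : F) :
    ∃ γ : SLZ n, γ ∈ Γ3 n ∧ red n (2^L) γ = rho F ι (ZMod (2^L)) f := by
  obtain ⟨t, ht3, ht2⟩ := exists_t L
  obtain ⟨l, hlp, hls⟩ := (Equiv.Perm.truncSwapFactors (Equiv.mulLeft f : Equiv.Perm F)).out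
  obtain ⟨γ, h3, h2⟩ := lift_swaps F ι L t ht3 ht2 l hls
  refine ⟨γ, h3, ?_⟩
  apply Subtype.ext
  rw [h2, rho_coe]
  congr 1
  rw [hlp]
  rfl

end LiftMain

section Core

variable {n : ℕ} (F : Type) [Group F] [Fintype F] [DecidableEq F] (ι : (F ⊕ F) ↪ Fin n)

lemma exists_c (K L : ℕ) : ∃ c : ℤ, ((c:ℤ) : ZMod 3) = 0 ∧
    ∀ j : ℕ, j ≤ L → ((c:ℤ) : ZMod (2^j)) = (((2:ℤ)^K : ℤ) : ZMod (2^j)) := by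
  obtain ⟨t, ht3, ht2⟩ := exists_t L
  refine ⟨t * 2^K, by push_cast; rw [ht3]; ring, ?_⟩
  intro j hj
  have hL : ((t * 2^K : ℤ) : ZMod (2^L)) = (((2:ℤ)^K : ℤ) : ZMod (2^L)) := by
    push_cast
    rw [ht2]
    ring
  have hmod := (ZMod.intCast_eq_intCast_iff _ _ _).mp hL
  refine (ZMod.intCast_eq_intCast_iff _ _ _).mpr (hmod.of_dvd ?_)
  exact_mod_cast pow_dvd_pow (2:ℕ) hj

lemma ker_le_core (k L : ℕ) (x : SLZ n) (hx3 : x ∈ Γ3 n) (hxL : red n (2^L) x = 1) :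
    x ∈ coreIn (Gl F ι k) (Gl F ι L) := by
  rw [mem_coreIn]
  intro h hh
  rw [mem_Gl]
  have hh3 : h ∈ Γ3 n := Gl_le_Γ3 F ι k hh
  constructor
  · rw [mem_Γ3, _root_.map_mul, _root_.map_mul, map_inv, red3_of_mem n hx3, red3_of_mem n hh3]
    simp
  · refine ⟨1, ?_⟩
    rw [_root_.map_one, _root_.map_mul, _root_.map_mul, map_inv, hxL]
    simp

lemma core_hard (k L : ℕ) (hL : max k 1 + 1 ≤ L) (x : SLZ n)
    (hx : x ∈ coreIn (Gl F ι k) (Gl F ι L)) : x ∈ Γ3 n ∧ red n (2^L) x = 1 := by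
  have hKpos : 1 ≤ max k 1 := le_max_right k 1
  rw [mem_coreIn] at hx
  have hx1 := hx 1 (Gl F ι k).one_mem
  rw [inv_one, one_mul, mul_one, mem_Gl] at hx1
  obtain ⟨hx3, f, hf⟩ := hx1
  refine ⟨hx3, ?_⟩
  rcases eq_or_ne f 1 with rfl | hf1
  · rw [← hf, _root_.map_one]
  · exfalso
    set K := max k 1 with hK
    set σ := sigma F ι f with hσ
    set a := ι (Sum.inl (1 : F)) with ha
    have hmove : σ a ≠ a := by
      rw [hσ, ha, sigma_apply_inl]
      intro hc
      exact hf1 (by simpa using Sum.inl.inj (ι.injective hc))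
    obtain ⟨c, hc3, hc2⟩ := exists_c K L
    set hmat := tvSL a (σ a) (Ne.symm hmove) c with hhm
    have hmem : hmat ∈ Gl F ι k := by
      rw [mem_Gl]
      refine ⟨(mem_Γ3 n).mpr (red_tvSL_eq_one 3 _ _ _ c hc3), 1, ?_⟩
      rw [_root_.map_one]
      apply Subtype.ext
      rw [hhm, red_tvSL_coe]
      have hck : ((c:ℤ) : ZMod (2^k)) = 0 := by
        rw [hc2 k (by omega)]
        have hd : ((2^k : ℕ) : ℤ) ∣ (2:ℤ)^K := by
          push_cast
          exact pow_dvd_pow 2 (le_max_left k 1)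
        exact (ZMod.intCast_zmod_eq_zero_iff_dvd _ _).mpr hd
      rw [hck]
      simp
    have hconj := hx hmat hmem
    rw [mem_Gl] at hconj
    obtain ⟨-, f'', hf''⟩ := hconj
    have heq : red n (2^L) x * red n (2^L) hmat
        = red n (2^L) hmat * rho F ι (ZMod (2^L)) f'' := by
      rw [hf'', ← _root_.map_mul, ← _root_.map_mul]
      congr 1
      group
    have hmatcoe : (red n (2^L) hmat : Matrix (Fin n) (Fin n) (ZMod (2^L)))
        = 1 + Matrix.single a (σ a) ((c:ℤ) : ZMod (2^L)) := by
      rw [hhm, red_tvSL_coe]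
    have hxcoe : (red n (2^L) x : Matrix (Fin n) (Fin n) (ZMod (2^L)))
        = permM (ZMod (2^L)) σ := by
      rw [← hf, rho_coe]
    have hmeq : permM (ZMod (2^L)) σ * (1 + Matrix.single a (σ a) ((c:ℤ) : ZMod (2^L)))
        = (1 + Matrix.single a (σ a) ((c:ℤ) : ZMod (2^L)))
          * permM (ZMod (2^L)) (sigma F ι f'') := by
      have := congrArg (Subtype.val) heq
      rw [Matrix.SpecialLinearGroup.coe_mul, Matrix.SpecialLinearGroup.coe_mul,
        hmatcoe, hxcoe, rho_coe] at this
      exact this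
    -- step 1 : f'' = f, by reduction mod 2
    have hdvd2 : (2:ℕ)^1 ∣ 2^L := pow_dvd_pow 2 (by omega)
    have hff : f'' = f := by
      have hmap := congrArg (fun M : Matrix (Fin n) (Fin n) (ZMod (2^L)) =>
        M.map (ZMod.castHom hdvd2 (ZMod (2^1)))) hmeq
      simp only [Matrix.map_mul] at hmap
      rw [map_one_add_std, permM_map, permM_map] at hmap
      have hcast : ∀ (M' : ℕ) (hd : 2^M' ∣ 2^L) (z : ℤ),
          (ZMod.castHom hd (ZMod (2^M'))) ((z:ℤ) : ZMod (2^L)) = ((z:ℤ) : ZMod (2^M')) := by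
        intro M' hd z
        have h2 := RingHom.congr_fun (Subsingleton.elim ((ZMod.castHom hd
          (ZMod (2^M'))).comp (Int.castRingHom (ZMod (2^L))))
          (Int.castRingHom (ZMod (2^M')))) z
        simpa using h2
      have hc1 : (ZMod.castHom hdvd2 (ZMod (2^1))) ((c:ℤ) : ZMod (2^L)) = 0 := by
        rw [hcast 1 hdvd2 c, hc2 1 (by omega)]
        have hd : ((2^1 : ℕ) : ℤ) ∣ (2:ℤ)^K := by
          push_cast
          exact pow_dvd_pow 2 hKpos
        exact (ZMod.intCast_zmod_eq_zero_iff_dvd _ _).mpr hd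
      rw [hc1] at hmap
      simp only [Matrix.single_zero, add_zero, mul_one, one_mul] at hmap
      haveI : Fact (1 < 2^1) := ⟨by norm_num⟩
      have hσeq : σ = sigma F ι f'' := permM_injective hmap
      rw [hσ] at hσeq
      exact (sigma_injective F ι hσeq).symm
    -- step 2 : contradiction mod 2^(K+1)
    have hcast : ∀ (M' : ℕ) (hd : 2^M' ∣ 2^L) (z : ℤ),
        (ZMod.castHom hd (ZMod (2^M'))) ((z:ℤ) : ZMod (2^L)) = ((z:ℤ) : ZMod (2^M')) := by
      intro M' hd z
      have h2 := RingHom.congr_fun (Subsingleton.elim ((ZMod.castHom hd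
        (ZMod (2^M'))).comp (Int.castRingHom (ZMod (2^L))))
        (Int.castRingHom (ZMod (2^M')))) z
      simpa using h2
    have hKL : (2:ℕ)^(K+1) ∣ 2^L := pow_dvd_pow 2 hL
    have hmap2 := congrArg (fun M : Matrix (Fin n) (Fin n) (ZMod (2^L)) =>
      M.map (ZMod.castHom hKL (ZMod (2^(K+1))))) hmeq
    simp only [Matrix.map_mul] at hmap2
    rw [map_one_add_std, permM_map, permM_map] at hmap2
    set w : ZMod (2^(K+1)) := ((2^K : ℕ) : ZMod (2^(K+1))) with hw
    have hcK : (ZMod.castHom hKL (ZMod (2^(K+1)))) ((c:ℤ) : ZMod (2^L)) = w := by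
      rw [hcast (K+1) hKL c, hc2 (K+1) hL, hw]
      push_cast
      ring
    rw [hcK, hff, ← hσ] at hmap2
    have hwne : w ≠ 0 := by
      rw [hw, Ne, ZMod.natCast_eq_zero_iff]
      intro hdvd
      have h1 := Nat.le_of_dvd (by positivity) hdvd
      rw [pow_succ] at h1
      have h2 : 1 ≤ (2:ℕ)^K := Nat.one_le_two_pow
      omega
    have hent := congrFun (congrFun hmap2 a) a
    rw [mul_add, add_mul, mul_one, one_mul, Matrix.add_apply, Matrix.add_apply,
      entry_PE w _ (Ne.symm hmove), entry_EP w _] at hent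
    rw [permM_apply σ (σ a) a, if_pos rfl, mul_one] at hent
    exact hwne (add_left_cancel hent.symm)

end Core

section DiscIso

variable {n : ℕ} (F : Type) [Group F] [Fintype F] [DecidableEq F] (ι : (F ⊕ F) ↪ Fin n)

noncomputable def gc (L : ℕ) (f : F) : SLZ n := (lift_exists F ι L f).choose

lemma gc_mem3 (L : ℕ) (f : F) : gc F ι L f ∈ Γ3 n := (lift_exists F ι L f).choose_spec.1

lemma gc_red (L : ℕ) (f : F) : red n (2^L) (gc F ι L f) = rho F ι (ZMod (2^L)) f :=
  (lift_exists F ι L f).choose_spec.2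

lemma gc_mem (L : ℕ) (f : F) : gc F ι L f ∈ Gl F ι L :=
  (mem_Gl F ι).mpr ⟨gc_mem3 F ι L f, f, (gc_red F ι L f).symm⟩

lemma core_mem_of (k L : ℕ) (u v : SLZ n) (hu3 : u ∈ Γ3 n) (hv3 : v ∈ Γ3 n)
    (h : red n (2^L) u = red n (2^L) v) :
    u⁻¹ * v ∈ coreIn (Gl F ι k) (Gl F ι L) := by
  apply ker_le_core F ι k L
  · exact (Γ3 n).mul_mem ((Γ3 n).inv_mem hu3) hv3
  · rw [_root_.map_mul, map_inv, h]
    simp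

lemma rho_inj_pow (j : ℕ) (hj : 1 ≤ j) {f f' : F}
    (h : rho F ι (ZMod (2^j)) f = rho F ι (ZMod (2^j)) f') : f = f' := by
  haveI : Fact (1 < 2^j) := ⟨by
    calc 1 < 2^1 := by norm_num
    _ ≤ 2^j := Nat.pow_le_pow_right (by norm_num) hj⟩
  exact rho_injective F ι (ZMod (2^j)) h

noncomputable def PsiFun (k : ℕ) (f : F) : ∀ ℓ : ℕ, Qgrp (Gl F ι) k (k + ℓ) :=
  fun ℓ => QuotientGroup.mk
    ⟨gc F ι (k+ℓ) f, Gl_mono F ι (Nat.le_add_right k ℓ) (gc_mem F ι (k+ℓ) f)⟩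

lemma PsiFun_mk_eq (k ℓ : ℕ) (f : F) (z : ↥(Gl F ι k)) (hz3 : (z : SLZ n) ∈ Γ3 n)
    (hzr : red n (2^(k+ℓ)) (z : SLZ n) = rho F ι (ZMod (2^(k+ℓ))) f) :
    PsiFun F ι k f ℓ = QuotientGroup.mk z := by
  apply QuotientGroup.eq.mpr
  rw [Subgroup.mem_subgroupOf]
  apply core_mem_of F ι k (k+ℓ)
  · exact gc_mem3 F ι (k+ℓ) f
  · exact hz3
  · rw [gc_red, hzr]

lemma PsiFun_mem (k : ℕ) (f : F) :
    PsiFun F ι k f ∈ Disc (Gl F ι) (Gl_desc F ι) k := by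
  constructor
  · intro ℓ
    exact ⟨⟨gc F ι (k+ℓ) f, Gl_mono F ι (Nat.le_add_right k ℓ) (gc_mem F ι (k+ℓ) f)⟩,
      Subgroup.mem_subgroupOf.mpr (gc_mem F ι (k+ℓ) f), rfl⟩
  · intro ℓ
    show (QuotientGroup.map _ _ (MonoidHom.id _) _) (PsiFun F ι k f (ℓ+1)) = PsiFun F ι k f ℓ
    rw [PsiFun, QuotientGroup.map_mk]
    exact (PsiFun_mk_eq F ι k ℓ f _ (gc_mem3 F ι (k+(ℓ+1)) f)
      (red_of_le F ι (by omega) _ (gc_red F ι (k+(ℓ+1)) f).symm).symm).symm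

noncomputable def Psi (k : ℕ) : F →* ↥(Disc (Gl F ι) (Gl_desc F ι) k) :=
  MonoidHom.mk' (fun f => ⟨PsiFun F ι k f, PsiFun_mem F ι k f⟩) (by
    intro f g
    apply Subtype.ext
    funext ℓ
    show PsiFun F ι k (f * g) ℓ = PsiFun F ι k f ℓ * PsiFun F ι k g ℓ
    exact PsiFun_mk_eq F ι k ℓ (f*g)
      (⟨gc F ι (k+ℓ) f, Gl_mono F ι (Nat.le_add_right k ℓ) (gc_mem F ι (k+ℓ) f)⟩ *
       ⟨gc F ι (k+ℓ) g, Gl_mono F ι (Nat.le_add_right k ℓ) (gc_mem F ι (k+ℓ) g)⟩)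
      ((Γ3 n).mul_mem (gc_mem3 F ι _ f) (gc_mem3 F ι _ g))
      (by show red n (2^(k+ℓ)) (gc F ι (k+ℓ) f * gc F ι (k+ℓ) g) = _
          rw [_root_.map_mul, gc_red, gc_red, ← _root_.map_mul]))

lemma Psi_injective (k : ℕ) : Function.Injective (Psi F ι k) := by
  rw [injective_iff_map_eq_one]
  intro f hf
  have h2 : PsiFun F ι k f 2 = 1 := by
    have := congrArg (fun z : ↥(Disc (Gl F ι) (Gl_desc F ι) k) =>
      (z : ∀ ℓ, Qgrp (Gl F ι) k (k + ℓ)) 2) hf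
    exact this
  have h3 := (QuotientGroup.eq_one_iff _).mp h2
  rw [Subgroup.mem_subgroupOf] at h3
  obtain ⟨-, hred⟩ := core_hard F ι k (k+2) (by omega) _ h3
  have hgr := gc_red F ι (k+2) f
  rw [hred] at hgr
  apply rho_inj_pow F ι (k+2) (by omega)
  rw [← hgr, _root_.map_one]

lemma Psi_surjective (k : ℕ) : Function.Surjective (Psi F ι k) := by
  rintro ⟨x, hx1, hx2⟩
  have hrep : ∀ ℓ, ∃ y : ↥(Gl F ι k), (y : SLZ n) ∈ Gl F ι (k+ℓ)
      ∧ QuotientGroup.mk y = x ℓ := by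
    intro ℓ
    obtain ⟨y, hy, hyeq⟩ := hx1 ℓ
    exact ⟨y, Subgroup.mem_subgroupOf.mp hy, hyeq⟩
  choose y hy1 hy2 using hrep
  have hlab : ∀ ℓ, ∃ f : F, rho F ι (ZMod (2^(k+ℓ))) f = red n (2^(k+ℓ)) ((y ℓ : SLZ n)) :=
    fun ℓ => ((mem_Gl F ι).mp (hy1 ℓ)).2
  choose lab hlabs using hlab
  have hcore : ∀ ℓ, ((y (ℓ+1) : SLZ n))⁻¹ * (y ℓ : SLZ n)
      ∈ coreIn (Gl F ι k) (Gl F ι (k+ℓ)) := by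
    intro ℓ
    have hb := hx2 ℓ
    rw [← hy2 ℓ, ← hy2 (ℓ+1)] at hb
    have hmapmk : (bond (Gl F ι) (Gl_desc F ι) k (k+ℓ)) (QuotientGroup.mk (y (ℓ+1)))
        = (QuotientGroup.mk (y (ℓ+1)) : Qgrp (Gl F ι) k (k+ℓ)) :=
      QuotientGroup.map_mk _ _ _ _ _
    have hb' : (QuotientGroup.mk (y (ℓ+1)) : Qgrp (Gl F ι) k (k+ℓ))
        = QuotientGroup.mk (y ℓ) := by
      rw [← hb]
      exact hmapmk.symm
    have := QuotientGroup.eq.mp hb'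
    rwa [Subgroup.mem_subgroupOf] at this
  have hstep : ∀ m, 2 ≤ m → lab (m+1) = lab m := by
    intro m hm
    obtain ⟨-, hred⟩ := core_hard F ι k (k+m) (by omega) _ (hcore m)
    have h1 : red n (2^(k+m)) ((y (m+1) : SLZ n)) = red n (2^(k+m)) ((y m : SLZ n)) := by
      have := congrArg (fun z => red n (2^(k+m)) ((y (m+1) : SLZ n)) * z) hred
      simpa [← _root_.map_mul, mul_assoc] using this.symm
    apply rho_inj_pow F ι (k+m) (by omega)
    rw [hlabs m, ← h1]
    exact red_of_le F ι (by omega) _ (hlabs (m+1))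
  have hstab : ∀ m, 2 ≤ m → lab m = lab 2 := by
    intro m hm
    induction m with
    | zero => omega
    | succ p ih =>
      rcases Nat.lt_or_ge p 2 with hp | hp
      · have : p + 1 = 2 := by omega
        rw [this]
      · rw [hstep p hp, ih hp]
  refine ⟨lab 2, ?_⟩
  apply Subtype.ext
  funext ℓ
  show PsiFun F ι k (lab 2) ℓ = x ℓ
  have key : ∀ m, 2 ≤ m → PsiFun F ι k (lab 2) m = x m := by
    intro m hm
    rw [← hy2 m]
    apply PsiFun_mk_eq F ι k m (lab 2) (y m) (Gl_le_Γ3 F ι k (y m).2)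
    rw [← hstab m hm]
    exact (hlabs m).symm
  have compatPsi := (PsiFun_mem F ι k (lab 2)).2
  have e1 : PsiFun F ι k (lab 2) 1 = x 1 := by
    have h := compatPsi 1
    rw [key 2 (by omega)] at h
    rw [← h, ← hx2 1]
  match ℓ with
  | 0 =>
    have h := compatPsi 0
    rw [e1] at h
    rw [← h, ← hx2 0]
  | 1 => exact e1
  | (m+2) => exact key (m+2) (by omega)

noncomputable def discIso (k : ℕ) : ↥(Disc (Gl F ι) (Gl_desc F ι) k) ≃* F :=
  (MulEquiv.ofBijective (Psi F ι k) ⟨Psi_injective F ι k, Psi_surjective F ι k⟩).symm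

end DiscIso

section Kernel

variable {n : ℕ} (F : Type) [Group F] [Fintype F] [DecidableEq F] (ι : (F ⊕ F) ↪ Fin n)

lemma SL_eq_one_of_red (x : SLZ n) (h : ∀ L : ℕ, red n (2^L) x = 1) : x = 1 := by
  have hent : ∀ i j, ((x : Matrix (Fin n) (Fin n) ℤ) - 1) i j = 0 := by
    intro i j
    apply int_eq_zero_of_forall_pow_dvd 2 (by norm_num)
    intro L
    have hL := h L
    have hthis := congrFun (congrFun (congrArg Subtype.val hL) i) j
    rw [red_coe] at hthis
    have h1 : (((x : Matrix (Fin n) (Fin n) ℤ) i j : ℤ) : ZMod (2^L))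
        = (((1 : Matrix (Fin n) (Fin n) ℤ) i j : ℤ) : ZMod (2^L)) := by
      rw [hthis]
      rcases eq_or_ne i j with rfl | hij
      · simp [Matrix.one_apply]
      · simp [Matrix.one_apply, hij]
    have h2 := (ZMod.intCast_eq_intCast_iff _ _ _).mp h1
    have h3 : ((2^L : ℕ) : ℤ) ∣ ((1 : Matrix (Fin n) (Fin n) ℤ) i j
        - (x : Matrix (Fin n) (Fin n) ℤ) i j) := h2.dvd
    rw [Matrix.sub_apply]
    have h4 := (dvd_sub_comm).mp h3
    push_cast at h4 ⊢
    exact h4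
  ext i j
  have := hent i j
  rw [Matrix.sub_apply] at this
  simp only [Matrix.SpecialLinearGroup.coe_one]
  linarith

lemma conj_pow_eq {G : Type*} [Group G] (a b : G) (N : ℕ) :
    (a⁻¹ * b * a) ^ N = a⁻¹ * b ^ N * a := by
  induction N with
  | zero => simp
  | succ N ih =>
    rw [pow_succ, pow_succ, ih]
    group

lemma kernel_lemma (g : ℕ → SLZ n) (x : SLZ n)
    (hg : ∀ ℓ, g ℓ ∈ Γ3 n)
    (hx : ∀ ℓ, (g ℓ)⁻¹ * x * g ℓ ∈ Gl F ι ℓ) : x = 1 := by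
  set N := Fintype.card F with hN
  have hNpos : 0 < N := Fintype.card_pos
  have hred : ∀ L, red n (2^L) (x ^ N) = 1 := by
    intro L
    obtain ⟨h3, f, hf⟩ := (mem_Gl F ι).mp (hx L)
    have h1 : red n (2^L) ((g L)⁻¹ * x ^ N * g L) = 1 := by
      rw [← conj_pow_eq, map_pow, ← hf, ← map_pow, hN, pow_card_eq_one, _root_.map_one]
    have h2 : red n (2^L) (x ^ N)
        = red n (2^L) (g L) * red n (2^L) ((g L)⁻¹ * x ^ N * g L) * (red n (2^L) (g L))⁻¹ := by
      rw [_root_.map_mul, _root_.map_mul, map_inv]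
      group
    rw [h2, h1]
    group
  have hxN := SL_eq_one_of_red (x ^ N) hred
  have hx0 : x ∈ Γ3 n := by
    have hco : x = (g 0) * ((g 0)⁻¹ * x * g 0) * (g 0)⁻¹ := by group
    rw [hco]
    exact (Γ3 n).mul_mem ((Γ3 n).mul_mem (hg 0) (Gl_le_Γ3 F ι 0 (hx 0)))
      ((Γ3 n).inv_mem (hg 0))
  by_contra hne
  have hne' : (⟨x, hx0⟩ : ↥(Γ3 n)) ≠ 1 := fun hc => hne (congrArg Subtype.val hc)
  apply Γ3_torsionFree n ⟨x, hx0⟩ hne'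
  refine isOfFinOrder_iff_pow_eq_one.mpr ⟨N, hNpos, ?_⟩
  apply Subtype.ext
  rw [SubgroupClass.coe_pow]
  exact hxN

end Kernel

end DHL


/-- **Theorem 1.5.** Fix `n ≥ 3`.  There is a torsion-free subgroup `G` of finite index in
`SL(n,ℤ)` such that for every non-trivial finite group `F` with `4(|F|+2) ≤ n` there is a
group chain `{G_ℓ}_{ℓ ≥ 0}` in `G` (descending, each of finite index in `G`, `G_0 = G`)
such that:
(1) for every `k ≥ 0` the discriminant group of the truncated chain `{G_ℓ}_{ℓ ≥ k}` is
isomorphic to `F` (the chain is stable with constant discriminant group `F`); and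
(2) for every compatible sequence `(g_ℓ)` in `G` (i.e. `g_ℓ⁻¹ g_{ℓ+1} ∈ G_ℓ`), the kernel
`⋂_ℓ g_ℓ G_ℓ g_ℓ⁻¹` of the conjugate chain is trivial. -/
theorem molino_stable_finite_fibre (n : ℕ) (hn : 3 ≤ n) :
    ∃ G : Subgroup (Matrix.SpecialLinearGroup (Fin n) ℤ),
      G.FiniteIndex ∧ Monoid.IsTorsionFree ↥G ∧
      ∀ (F : Type) [Group F] [Fintype F], Nontrivial F →
        4 * (Fintype.card F + 2) ≤ n →
        ∃ (Gl : ℕ → Subgroup (Matrix.SpecialLinearGroup (Fin n) ℤ))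
          (hdesc : ∀ ℓ, Gl (ℓ + 1) ≤ Gl ℓ),
          Gl 0 = G ∧
          (∀ ℓ, ((Gl ℓ).subgroupOf G).FiniteIndex) ∧
          (∀ k : ℕ, Nonempty (↥(Disc Gl hdesc k) ≃* F)) ∧
          (∀ g : ℕ → Matrix.SpecialLinearGroup (Fin n) ℤ,
            (∀ ℓ, g ℓ ∈ G) → (∀ ℓ, (g ℓ)⁻¹ * g (ℓ + 1) ∈ Gl ℓ) →
            (⨅ ℓ : ℕ, conjSub (g ℓ) (Gl ℓ)) = ⊥) := by
  classical
  refine ⟨DHL.Γ3 n, inferInstance, DHL.Γ3_torsionFree n, ?_⟩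
  intro F _ _ hFnt hcard
  haveI : DecidableEq F := Classical.decEq F
  have hcard2 : Fintype.card (F ⊕ F) ≤ Fintype.card (Fin n) := by
    rw [Fintype.card_sum, Fintype.card_fin]
    omega
  obtain ⟨ι⟩ := Function.Embedding.nonempty_of_card_le hcard2
  refine ⟨DHL.Gl F ι, DHL.Gl_desc F ι, DHL.Gl_zero F ι, DHL.Gl_finiteIndex F ι,
    fun k => ⟨DHL.discIso F ι k⟩, ?_⟩
  intro g hgG hgcompat
  rw [eq_bot_iff]
  intro x hxmem
  have hxconj : ∀ ℓ, (g ℓ)⁻¹ * x * g ℓ ∈ DHL.Gl F ι ℓ := fun ℓ =>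
    mem_conjSub.mp (Subgroup.mem_iInf.mp hxmem ℓ)
  exact Subgroup.mem_bot.mpr (DHL.kernel_lemma F ι g x hgG hxconj)
end

section
/- Let C be a profinite group, let G ⊆ C be a finitely generated dense subgroup, and let D ⊆ C be a closed subgroup of infinite index whose rational core is trivial, i.e. ⋂_{k∈G} k D k⁻¹ = {e}. Then there exists a group chain {G_ℓ}_{ℓ≥0} in G with G_0 = G whose discriminant group lim←_{ℓ} G_ℓ/core_G(G_ℓ) is isomorphic to D as a topological group. -/
section DiscTopology

variable {Γ : Type*} [Group Γ]

/-- The inverse-limit topology on the discriminant group: the topology induced from the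
product of the discrete topologies on the quotients `G_n/E_{n,ℓ}`. -/
def discTopology (G : ℕ → Subgroup Γ) (hG : ∀ ℓ, G (ℓ + 1) ≤ G ℓ) (n : ℕ) :
    TopologicalSpace ↥(Disc G hG n) :=
  TopologicalSpace.induced (fun x => (x : ∀ ℓ : ℕ, Qgrp G n (n + ℓ)))
    (@Pi.topologicalSpace ℕ (fun ℓ => Qgrp G n (n + ℓ)) (fun _ => ⊥))

end DiscTopology

section AuxCountability

open Subgroup

/-- A finitely generated group has only finitely many homomorphisms into a finite group. -/
theorem finite_monoidHom_of_fg {Γ N : Type*} [Group Γ] [Group N] [Finite N]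
    (hfg : Group.FG Γ) : Finite (Γ →* N) := by
  obtain ⟨S, hS, hSfin⟩ := Group.fg_iff.mp hfg
  haveI : Finite ↥S := hSfin.to_subtype
  have hinj : Function.Injective (fun f : Γ →* N => (fun s : S => f (s : Γ))) := by
    intro f g h
    exact MonoidHom.eq_of_eqOn_dense hS (fun x hx => congrFun h ⟨x, hx⟩)
  exact Finite.of_injective _ hinj

/-- The permutation representation of `Γ` on `Γ ⧸ H`, transported to `Fin (Nat.card (Γ ⧸ H))`. -/
noncomputable def permRep {Γ : Type*} [Group Γ] (H : Subgroup Γ) [H.FiniteIndex] :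
    Γ →* Equiv.Perm (Fin (Nat.card (Γ ⧸ H))) where
  toFun g := (Finite.equivFin (Γ ⧸ H)).permCongr (MulAction.toPermHom Γ (Γ ⧸ H) g)
  map_one' := by
    ext x
    simp [Equiv.permCongr_apply]
  map_mul' a b := by
    ext x
    simp [Equiv.permCongr_apply, mul_smul]

theorem permRep_spec {Γ : Type*} [Group Γ] (H : Subgroup Γ) [H.FiniteIndex] (g : Γ) :
    g ∈ H ↔ permRep H g (Finite.equivFin (Γ ⧸ H) ((1 : Γ) : Γ ⧸ H)) =
      Finite.equivFin (Γ ⧸ H) ((1 : Γ) : Γ ⧸ H) := by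
  have h1 : permRep H g (Finite.equivFin (Γ ⧸ H) ((1 : Γ) : Γ ⧸ H)) =
      Finite.equivFin (Γ ⧸ H) (g • ((1 : Γ) : Γ ⧸ H)) := by
    simp [permRep, Equiv.permCongr_apply]
  rw [h1]
  constructor
  · intro hg
    have h2 : g ∈ MulAction.stabilizer Γ ((1 : Γ) : Γ ⧸ H) := by
      rw [MulAction.stabilizer_quotient]; exact hg
    rw [MulAction.mem_stabilizer_iff] at h2
    rw [h2]
  · intro hg
    have h2 : g • ((1 : Γ) : Γ ⧸ H) = ((1 : Γ) : Γ ⧸ H) :=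
      (Finite.equivFin (Γ ⧸ H)).injective hg
    have h3 : g ∈ MulAction.stabilizer Γ ((1 : Γ) : Γ ⧸ H) :=
      MulAction.mem_stabilizer_iff.mpr h2
    rwa [MulAction.stabilizer_quotient] at h3

/-- A finitely generated group has countably many finite-index subgroups. -/
theorem countable_finiteIndex_subgroup {Γ : Type*} [Group Γ] (hfg : Group.FG Γ) :
    Countable {H : Subgroup Γ // H.FiniteIndex} := by
  haveI : ∀ n : ℕ, Countable (Γ →* Equiv.Perm (Fin n)) := fun n =>
    @Finite.to_countable _ (finite_monoidHom_of_fg hfg)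
  let recover : (Σ n : ℕ, (Γ →* Equiv.Perm (Fin n)) × Fin n) → Subgroup Γ := fun s =>
    Subgroup.comap s.2.1 (MulAction.stabilizer (Equiv.Perm (Fin s.1)) s.2.2)
  let F : {H : Subgroup Γ // H.FiniteIndex} → Σ n : ℕ, (Γ →* Equiv.Perm (Fin n)) × Fin n :=
    fun H =>
      haveI := H.2
      ⟨Nat.card (Γ ⧸ H.1), permRep H.1, Finite.equivFin (Γ ⧸ H.1) ((1 : Γ) : Γ ⧸ H.1)⟩
  have hrec : ∀ H : {H : Subgroup Γ // H.FiniteIndex}, recover (F H) = H.1 := by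
    intro H
    haveI := H.2
    ext g
    rw [Subgroup.mem_comap, MulAction.mem_stabilizer_iff]
    exact (permRep_spec H.1 g).symm
  have hinj : Function.Injective F := by
    intro H H' h
    exact Subtype.ext ((hrec H).symm.trans (by rw [h, hrec H']))
  exact hinj.countable

/-- If a compact group has a finitely generated dense subgroup, then it has only countably
many open normal subgroups. -/
theorem countable_openNormalSubgroup
    {C : Type*} [Group C] [TopologicalSpace C] [IsTopologicalGroup C] [CompactSpace C]
    (G : Subgroup C) (hGfg : Group.FG ↥G) (hGdense : Dense (G : Set C)) :
    Countable (OpenNormalSubgroup C) := by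
  haveI := countable_finiteIndex_subgroup hGfg
  have hMopen : ∀ M : OpenNormalSubgroup C, IsOpen ((M : Subgroup C) : Set C) := fun M =>
    M.toOpenSubgroup.isOpen
  have hJ : ∀ N : OpenNormalSubgroup C, ((N : Subgroup C).subgroupOf G).FiniteIndex := by
    intro N
    haveI : Finite (C ⧸ (N : Subgroup C)) :=
      Subgroup.quotient_finite_of_isOpen _ (hMopen N)
    haveI : (N : Subgroup C).FiniteIndex := (N : Subgroup C).finiteIndex_of_finite_quotient
    infer_instance
  have hinj : Function.Injective (fun N : OpenNormalSubgroup C =>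
      (⟨(N : Subgroup C).subgroupOf G, hJ N⟩ : {H : Subgroup ↥G // H.FiniteIndex})) := by
    intro N N' h
    have h' : (N : Subgroup C).subgroupOf G = (N' : Subgroup C).subgroupOf G :=
      congrArg Subtype.val h
    have hmem : ∀ x : ↥G, ((x : C) ∈ (N : Subgroup C)) ↔ ((x : C) ∈ (N' : Subgroup C)) := by
      intro x
      constructor
      · intro hx
        have hx' : x ∈ (N : Subgroup C).subgroupOf G := Subgroup.mem_subgroupOf.mpr hx
        rw [h'] at hx'
        exact Subgroup.mem_subgroupOf.mp hx'
      · intro hx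
        have hx' : x ∈ (N' : Subgroup C).subgroupOf G := Subgroup.mem_subgroupOf.mpr hx
        rw [← h'] at hx'
        exact Subgroup.mem_subgroupOf.mp hx'
    have key : ∀ M : OpenNormalSubgroup C,
        ((M : Subgroup C) : Set C) = _root_.closure (((M : Subgroup C) : Set C) ∩ (G : Set C)) := by
      intro M
      refine subset_antisymm (hGdense.open_subset_closure_inter (hMopen M)) ?_
      exact closure_minimal Set.inter_subset_left
        ((M : Subgroup C).isClosed_of_isOpen (hMopen M))
    have hsets : ((N : Subgroup C) : Set C) ∩ (G : Set C)
        = ((N' : Subgroup C) : Set C) ∩ (G : Set C) :=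
      Set.ext fun c => ⟨fun hc => ⟨(hmem ⟨c, hc.2⟩).mp hc.1, hc.2⟩,
        fun hc => ⟨(hmem ⟨c, hc.2⟩).mpr hc.1, hc.2⟩⟩
    apply SetLike.coe_injective
    show ((N : Subgroup C) : Set C) = ((N' : Subgroup C) : Set C)
    rw [key N, key N', hsets]
  exact hinj.countable

end AuxCountability

section AuxTopology

/-- Continuity into a set endowed with the topology induced from a product of
bottom (discrete) topologies, from locally constant coordinates. -/
theorem continuous_into_induced_pi_bot {X Y : Type*} {ι : Type*} {π : ι → Type*}
    [tX : TopologicalSpace X] (c : Y → ∀ i, π i) (f : X → Y)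
    (h : ∀ i, IsLocallyConstant (fun x => c (f x) i)) :
    @Continuous X Y tX (TopologicalSpace.induced c
      (@Pi.topologicalSpace ι π (fun _ => ⊥))) f := by
  letI : ∀ i, TopologicalSpace (π i) := fun _ => ⊥
  rw [continuous_induced_rng]
  exact continuous_pi fun i => (h i).continuous

theorem t2space_induced_pi_bot {Y : Type*} {ι : Type*} {π : ι → Type*}
    (c : Y → ∀ i, π i) (hc : Function.Injective c) :
    @T2Space Y (TopologicalSpace.induced c (@Pi.topologicalSpace ι π (fun _ => ⊥))) := by
  letI : ∀ i, TopologicalSpace (π i) := fun _ => ⊥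
  haveI : ∀ i, DiscreteTopology (π i) := fun _ => ⟨rfl⟩
  letI : TopologicalSpace Y := TopologicalSpace.induced c Pi.topologicalSpace
  exact Topology.IsEmbedding.t2Space ⟨⟨rfl⟩, hc⟩

theorem continuous_symm_of_equiv_compact_to_t2 {X Y : Type*} [tX : TopologicalSpace X]
    [CompactSpace X] {tY : TopologicalSpace Y} (hT2 : @T2Space Y tY) (e : X ≃ Y)
    (he : @Continuous _ _ tX tY e) : @Continuous _ _ tY tX e.symm := by
  letI := tY
  exact (Continuous.homeoOfEquivCompactToT2 (f := e) he).symm.continuous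

end AuxTopology


open scoped Pointwise in
/-- **Proposition 9.1.** Let `C` be a profinite group, `G ⊆ C` a finitely generated dense
subgroup, and `D ⊆ C` a closed subgroup of infinite index whose rational core
`⋂_{k ∈ G} k D k⁻¹` is trivial.  Then there is a group chain `{G_ℓ}_{ℓ ≥ 0}` in `G`
with `G_0 = G` whose discriminant group `lim←_ℓ G_ℓ/core_G(G_ℓ)` is isomorphic to `D`
as a topological group. -/
theorem lenstra_construction
    {C : Type*} [Group C] [TopologicalSpace C] [IsTopologicalGroup C]
    [CompactSpace C] [T2Space C] [TotallyDisconnectedSpace C]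
    (G : Subgroup C) (hGfg : Group.FG ↥G) (hGdense : Dense (G : Set C))
    (D : Subgroup C) (hDclosed : IsClosed (D : Set C)) (hDindex : D.index = 0)
    (hDcore : (⨅ k : ↥G, conjSub (k : C) D) = ⊥) :
    ∃ (Gl : ℕ → Subgroup C) (hdesc : ∀ ℓ, Gl (ℓ + 1) ≤ Gl ℓ),
      Gl 0 = G ∧
      (∀ ℓ, ((Gl ℓ).subgroupOf G).FiniteIndex) ∧
      ∃ e : ↥D ≃* ↥(Disc Gl hdesc 0),
        @Continuous _ _ inferInstance (discTopology Gl hdesc 0) ⇑e ∧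
        @Continuous _ _ (discTopology Gl hdesc 0) inferInstance ⇑e.symm := by
  classical
  -- an enumeration of all open normal subgroups of `C`
  haveI hcount : Countable (OpenNormalSubgroup C) :=
    countable_openNormalSubgroup G hGfg hGdense
  haveI htopnormal : ((⊤ : OpenSubgroup C) : Subgroup C).Normal := by
    have h : ((⊤ : OpenSubgroup C) : Subgroup C) = ⊤ := rfl
    rw [h]; infer_instance
  haveI hnonempty : Nonempty (OpenNormalSubgroup C) := ⟨⟨⊤, htopnormal⟩⟩
  obtain ⟨f, hf⟩ := exists_surjective_nat (OpenNormalSubgroup C)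
  -- the descending chain of open normal subgroups
  let Cl : ℕ → OpenNormalSubgroup C := fun n =>
    Nat.rec (⟨⊤, htopnormal⟩) (fun k N => N ⊓ f k) n
  have hCl0 : (Cl 0).toOpenSubgroup.toSubgroup = ⊤ := rfl
  have hClsucc : ∀ n, (Cl (n + 1)).toOpenSubgroup.toSubgroup = (Cl n).toOpenSubgroup.toSubgroup ⊓ (f n).toOpenSubgroup.toSubgroup :=
    fun n => rfl
  have hClmono : ∀ n, (Cl (n + 1)).toOpenSubgroup.toSubgroup ≤ (Cl n).toOpenSubgroup.toSubgroup := by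
    intro n; rw [hClsucc n]; exact inf_le_left
  have hClsub : ∀ n, (Cl (n + 1)).toOpenSubgroup.toSubgroup ≤ (f n).toOpenSubgroup.toSubgroup := by
    intro n; rw [hClsucc n]; exact inf_le_right
  -- the chain of clopen subgroups V, its normal cores K, and the group chain Gl
  set V : ℕ → Subgroup C := fun ℓ => (Cl ℓ).toOpenSubgroup.toSubgroup ⊔ D with hV
  set K : ℕ → Subgroup C := fun ℓ => (V ℓ).normalCore with hK
  set Gl : ℕ → Subgroup C := fun ℓ => V ℓ ⊓ G with hGldef
  have hV0 : V 0 = ⊤ := by rw [hV]; simp [hCl0]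
  have hGl0 : Gl 0 = G := by rw [hGldef]; simp [hV0]
  have hVopen : ∀ ℓ, IsOpen (V ℓ : Set C) := fun ℓ =>
    Subgroup.isOpen_of_openSubgroup _ (le_sup_left : ((Cl ℓ).toOpenSubgroup : Subgroup C) ≤ V ℓ)
  have hVclosed : ∀ ℓ, IsClosed (V ℓ : Set C) := fun ℓ =>
    (V ℓ).isClosed_of_isOpen (hVopen ℓ)
  have hVfin : ∀ ℓ, (V ℓ).FiniteIndex := fun ℓ =>
    haveI : Finite (C ⧸ V ℓ) := Subgroup.quotient_finite_of_isOpen _ (hVopen ℓ)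
    (V ℓ).finiteIndex_of_finite_quotient
  have hVdesc : ∀ ℓ, V (ℓ + 1) ≤ V ℓ := fun ℓ => sup_le_sup_right (hClmono ℓ) D
  have hDleV : ∀ ℓ, D ≤ V ℓ := fun ℓ => le_sup_right
  have hKnormal : ∀ ℓ, (K ℓ).Normal := fun ℓ => Subgroup.normalCore_normal _
  have hKleV : ∀ ℓ, K ℓ ≤ V ℓ := fun ℓ => Subgroup.normalCore_le _
  have hKdesc : ∀ ℓ, K (ℓ + 1) ≤ K ℓ := fun ℓ => Subgroup.normalCore_mono (hVdesc ℓ)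
  have hKclosed : ∀ ℓ, IsClosed (K ℓ : Set C) := fun ℓ =>
    Subgroup.normalCore_isClosed _ (hVclosed ℓ)
  have hKopen : ∀ ℓ, IsOpen (K ℓ : Set C) := fun ℓ =>
    haveI := hVfin ℓ
    Subgroup.isOpen_of_isClosed_of_finiteIndex _ (hKclosed ℓ)
  have hmemK : ∀ ℓ (x : C), x ∈ K ℓ ↔ ∀ b : C, b * x * b⁻¹ ∈ V ℓ := fun ℓ x => Iff.rfl
  have hdesc : ∀ ℓ, Gl (ℓ + 1) ≤ Gl ℓ := fun ℓ => inf_le_inf_right G (hVdesc ℓ)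
  have hGlleG : ∀ ℓ, Gl ℓ ≤ G := fun ℓ => inf_le_right
  have hGlleV : ∀ ℓ, Gl ℓ ≤ V ℓ := fun ℓ => inf_le_left
  refine ⟨Gl, hdesc, hGl0, ?_, ?_⟩
  · -- finite index
    intro ℓ
    have : (Gl ℓ).subgroupOf G = (V ℓ).subgroupOf G := by
      ext x
      simp only [Subgroup.mem_subgroupOf, hGldef, Subgroup.mem_inf]
      exact ⟨fun h => h.1, fun h => ⟨h, x.2⟩⟩
    rw [this]
    haveI := hVfin ℓ
    infer_instance
  -- intersection facts
  have hVD : ∀ x : C, (∀ ℓ, x ∈ V ℓ) → x ∈ D := by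
    intro x hx
    by_contra hxD
    have hW : IsOpen ((fun y => x * y) ⁻¹' ((D : Set C)ᶜ)) :=
      (hDclosed.isOpen_compl).preimage (continuous_const.mul continuous_id)
    have h1W : (1 : C) ∈ (fun y => x * y) ⁻¹' ((D : Set C)ᶜ) := by
      simp only [Set.mem_preimage, mul_one, Set.mem_compl_iff, SetLike.mem_coe]
      exact hxD
    obtain ⟨t, htc, h1t, htW⟩ := compact_exists_isClopen_in_isOpen hW h1W
    obtain ⟨N, hN⟩ := IsTopologicalGroup.exist_openNormalSubgroup_sub_clopen_nhds_of_one htc h1t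
    obtain ⟨i, rfl⟩ := hf N
    have hx1 : x ∈ ((Cl (i + 1)).toOpenSubgroup.toSubgroup : Set C) * (D : Set C) := by
      haveI : ((Cl (i + 1)).toOpenSubgroup.toSubgroup).Normal := (Cl (i + 1)).isNormal'
      rw [← Subgroup.normal_mul]
      exact hx (i + 1)
    obtain ⟨n, hn, d, hd, hx2⟩ := hx1
    have hnN : n ∈ (f i).toOpenSubgroup.toSubgroup := hClsub i hn
    have hmN : x⁻¹ * n⁻¹ * x ∈ (f i).toOpenSubgroup.toSubgroup := by
      have := (f i).isNormal'.conj_mem n⁻¹ ((f i).toOpenSubgroup.toSubgroup.inv_mem hnN) x⁻¹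
      simpa using this
    have : x * (x⁻¹ * n⁻¹ * x) ∈ (D : Set C)ᶜ := htW (hN hmN)
    have hxd : x * (x⁻¹ * n⁻¹ * x) = d := by
      rw [← hx2]; group
    rw [hxd] at this
    exact this hd
  have hKbot : ∀ x : C, (∀ ℓ, x ∈ K ℓ) → x = 1 := by
    intro x hx
    have : x ∈ (⊥ : Subgroup C) := by
      rw [← hDcore, Subgroup.mem_iInf]
      intro k
      rw [mem_conjSub]
      apply hVD
      intro ℓ
      have := (hmemK ℓ x).mp (hx ℓ) (k : C)⁻¹
      simpa using this
    simpa [Subgroup.mem_bot] using this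
  -- the core of Gl ℓ in Gl 0 is K ℓ ∩ G
  have hE : ∀ (m : ℕ) (x : C), x ∈ coreIn (Gl 0) (Gl m) ↔ x ∈ G ∧ x ∈ K m := by
    intro m x
    constructor
    · intro h
      rw [mem_coreIn] at h
      have hxG : x ∈ G := by
        have := h 1 (Subgroup.one_mem _)
        simpa using hGlleG m this
      refine ⟨hxG, ?_⟩
      rw [hmemK]
      have hclosed : IsClosed {b : C | b * x * b⁻¹ ∈ V m} :=
        (hVclosed m).preimage ((continuous_id.mul continuous_const).mul continuous_inv)
      have hGsub : (G : Set C) ⊆ {b : C | b * x * b⁻¹ ∈ V m} := by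
        intro b hb
        have hbG : b⁻¹ ∈ Gl 0 := by
          rw [hGl0]; exact G.inv_mem hb
        have := h b⁻¹ hbG
        simp only [inv_inv] at this
        exact hGlleV m this
      have : Set.univ ⊆ {b : C | b * x * b⁻¹ ∈ V m} := by
        rw [← hGdense.closure_eq]
        exact hclosed.closure_subset_iff.mpr hGsub
      exact fun b => this (Set.mem_univ b)
    · rintro ⟨hxG, hxK⟩
      rw [mem_coreIn]
      intro h hh
      have hhG : h ∈ G := by rw [← hGl0]; exact hh
      have h1 : h⁻¹ * x * h ∈ V m := by
        have := (hmemK m x).mp hxK h⁻¹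
        simpa using this
      have h2 : h⁻¹ * x * h ∈ G := G.mul_mem (G.mul_mem (G.inv_mem hhG) hxG) hhG
      rw [hGldef]
      exact Subgroup.mem_inf.mpr ⟨h1, h2⟩
  have hGl0G : ∀ g : ↥(Gl 0), (g : C) ∈ G := fun g => by
    rw [← hGl0]; exact g.2
  -- quotient coset equality criterion
  have hW : ∀ (m : ℕ) (g g' : ↥(Gl 0)),
      (QuotientGroup.mk g : Qgrp Gl 0 m) = QuotientGroup.mk g' ↔ (g : C)⁻¹ * g' ∈ K m := by
    intro m g g'
    rw [QuotientGroup.eq, Subgroup.mem_subgroupOf]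
    rw [hE m]
    simp only [Subgroup.coe_mul, InvMemClass.coe_inv]
    exact ⟨fun h => h.2, fun h => ⟨G.mul_mem (G.inv_mem (hGl0G g)) (hGl0G g'), h⟩⟩
  -- choice of representatives
  have hrep : ∀ (m : ℕ) (d : C), d ∈ D →
      ∃ g : ↥(Gl 0), (g : C) ∈ Gl m ∧ (g : C)⁻¹ * d ∈ K m := by
    intro m d hd
    have hopen : IsOpen {c : C | d⁻¹ * c ∈ K m} :=
      (hKopen m).preimage (continuous_const.mul continuous_id)
    have hne : {c : C | d⁻¹ * c ∈ K m}.Nonempty :=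
      ⟨d, show d⁻¹ * d ∈ K m by rw [inv_mul_cancel]; exact (K m).one_mem⟩
    obtain ⟨y, hyU, hyG⟩ := hGdense.inter_open_nonempty _ hopen hne
    have hyV : y ∈ V m := by
      have h1 : y = d * (d⁻¹ * y) := by group
      rw [h1]
      exact (V m).mul_mem (hDleV m hd) (hKleV m hyU)
    refine ⟨⟨y, ?_⟩, ?_, ?_⟩
    · rw [hGl0]; exact hyG
    · exact Subgroup.mem_inf.mpr ⟨hyV, hyG⟩
    · have : y⁻¹ * d = (d⁻¹ * y)⁻¹ := by group
      rw [this]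
      exact (K m).inv_mem hyU
  let gfun : ↥D → ∀ m : ℕ, ↥(Gl 0) := fun d m => (hrep m (d : C) d.2).choose
  have hgfun1 : ∀ (d : ↥D) (m : ℕ), ((gfun d m : ↥(Gl 0)) : C) ∈ Gl m :=
    fun d m => (hrep m (d : C) d.2).choose_spec.1
  have hgfun2 : ∀ (d : ↥D) (m : ℕ), ((gfun d m : ↥(Gl 0)) : C)⁻¹ * d ∈ K m :=
    fun d m => (hrep m (d : C) d.2).choose_spec.2
  let φfun : ↥D → ∀ ℓ : ℕ, Qgrp Gl 0 (0 + ℓ) := fun d ℓ => QuotientGroup.mk (gfun d (0 + ℓ))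
  -- independence of representative
  have hR : ∀ (d : ↥D) (m : ℕ) (g : ↥(Gl 0)), (g : C)⁻¹ * d ∈ K m →
      (QuotientGroup.mk (gfun d m) : Qgrp Gl 0 m) = QuotientGroup.mk g := by
    intro d m g hg
    rw [hW m]
    have heq : ((gfun d m : ↥(Gl 0)) : C)⁻¹ * g =
        (((gfun d m : ↥(Gl 0)) : C)⁻¹ * d) * ((g : C)⁻¹ * d)⁻¹ := by group
    rw [heq]
    exact (K m).mul_mem (hgfun2 d m) ((K m).inv_mem hg)
  have hmem : ∀ d : ↥D, φfun d ∈ Disc Gl hdesc 0 := by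
    intro d
    constructor
    · intro ℓ
      refine Subgroup.mem_map.mpr ⟨gfun d (0 + ℓ), ?_, rfl⟩
      exact Subgroup.mem_subgroupOf.mpr (hgfun1 d (0 + ℓ))
    · intro ℓ
      show bond Gl hdesc 0 (0 + ℓ) (QuotientGroup.mk (gfun d (0 + (ℓ + 1)))) =
        QuotientGroup.mk (gfun d (0 + ℓ))
      rw [bond, QuotientGroup.map_mk]
      refine (hR d (0 + ℓ) (gfun d (0 + (ℓ + 1))) ?_).symm
      exact hKdesc (0 + ℓ) (hgfun2 d (0 + (ℓ + 1)))
  -- the homomorphism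
  have hmul : ∀ a b : ↥D, ∀ ℓ : ℕ, φfun (a * b) ℓ = φfun a ℓ * φfun b ℓ := by
    intro a b ℓ
    set m := 0 + ℓ with hm
    show QuotientGroup.mk (gfun (a * b) m) =
      QuotientGroup.mk (gfun a m) * QuotientGroup.mk (gfun b m)
    rw [← QuotientGroup.mk_mul]
    apply hR
    haveI := hKnormal m
    have key : ((gfun a m * gfun b m : ↥(Gl 0)) : C)⁻¹ * ((a * b : ↥D) : C) =
        (((gfun b m : ↥(Gl 0)) : C)⁻¹ * (((gfun a m : ↥(Gl 0)) : C)⁻¹ * a) *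
          ((gfun b m : ↥(Gl 0)) : C)) * (((gfun b m : ↥(Gl 0)) : C)⁻¹ * b) := by
      push_cast
      group
    rw [key]
    refine (K m).mul_mem ?_ (hgfun2 b m)
    have := (hKnormal m).conj_mem _ (hgfun2 a m) ((gfun b m : ↥(Gl 0)) : C)⁻¹
    simpa using this
  let φ : ↥D →* ↥(Disc Gl hdesc 0) :=
    MonoidHom.mk' (fun d => ⟨φfun d, hmem d⟩)
      (fun a b => Subtype.ext (funext fun ℓ => hmul a b ℓ))
  -- injectivity
  have hinj : Function.Injective φ := by
    intro a b hab
    have h1 : ∀ ℓ : ℕ, φfun a ℓ = φfun b ℓ := fun ℓ =>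
      congrFun (congrArg Subtype.val hab) ℓ
    have h2 : ∀ m : ℕ, (a : C)⁻¹ * b ∈ K m := by
      intro m
      have h3 := (hW (0 + m) _ _).mp (h1 m)
      have key : (a : C)⁻¹ * b =
          (((gfun a (0 + m) : ↥(Gl 0)) : C)⁻¹ * a)⁻¹ *
            (((gfun a (0 + m) : ↥(Gl 0)) : C)⁻¹ * (gfun b (0 + m) : ↥(Gl 0))) *
            (((gfun b (0 + m) : ↥(Gl 0)) : C)⁻¹ * b) := by group
      have hKm : (a : C)⁻¹ * b ∈ K (0 + m) := by
        rw [key]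
        exact (K (0 + m)).mul_mem
          ((K (0 + m)).mul_mem ((K (0 + m)).inv_mem (hgfun2 a (0 + m))) h3)
          (hgfun2 b (0 + m))
      simpa [Nat.zero_add] using hKm
    have h4 : (a : C)⁻¹ * b = 1 := hKbot _ h2
    exact Subtype.ext (inv_mul_eq_one.mp h4)
  -- surjectivity
  have hsurj : Function.Surjective φ := by
    intro x
    obtain ⟨h1, h2⟩ := x.2
    have h1' : ∀ ℓ : ℕ, ∃ g : ↥(Gl 0), g ∈ (Gl (0 + ℓ)).subgroupOf (Gl 0) ∧
        (QuotientGroup.mk' ((coreIn (Gl 0) (Gl (0 + ℓ))).subgroupOf (Gl 0))) g = x.1 ℓ :=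
      fun ℓ => Subgroup.mem_map.mp (h1 ℓ)
    choose gs hgs1 hgs2 using h1'
    simp only [QuotientGroup.mk'_apply] at hgs2
    have hbond : ∀ ℓ, ((gs (ℓ + 1) : C))⁻¹ * (gs ℓ : C) ∈ K (0 + ℓ) := by
      intro ℓ
      have hb := h2 ℓ
      rw [← hgs2 (ℓ + 1), ← hgs2 ℓ] at hb
      have hb' : (QuotientGroup.mk (gs (ℓ + 1)) : Qgrp Gl 0 (0 + ℓ)) =
          QuotientGroup.mk (gs ℓ) := by
        rw [← hb]
        show bond Gl hdesc 0 (0 + ℓ) (QuotientGroup.mk (gs (ℓ + 1))) = _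
        rw [bond, QuotientGroup.map_mk]
        rfl
      exact (hW (0 + ℓ) _ _).mp hb'
    set F : ℕ → Set C := fun ℓ => {c : C | (gs ℓ : C)⁻¹ * c ∈ K (0 + ℓ)} with hF
    have hFclosed : ∀ ℓ, IsClosed (F ℓ) := fun ℓ =>
      (hKclosed (0 + ℓ)).preimage (continuous_const.mul continuous_id)
    have hFne : ∀ ℓ, (F ℓ).Nonempty := fun ℓ =>
      ⟨gs ℓ, show ((gs ℓ : C))⁻¹ * (gs ℓ : C) ∈ K (0 + ℓ) by
        rw [inv_mul_cancel]; exact (K (0 + ℓ)).one_mem⟩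
    have hFsub : ∀ ℓ, F (ℓ + 1) ⊆ F ℓ := by
      intro ℓ c hc
      have hc' : (gs (ℓ + 1) : C)⁻¹ * c ∈ K (0 + (ℓ + 1)) := hc
      have key : (gs ℓ : C)⁻¹ * c =
          ((gs (ℓ + 1) : C)⁻¹ * (gs ℓ : C))⁻¹ * ((gs (ℓ + 1) : C)⁻¹ * c) := by group
      show (gs ℓ : C)⁻¹ * c ∈ K (0 + ℓ)
      rw [key]
      exact (K (0 + ℓ)).mul_mem ((K (0 + ℓ)).inv_mem (hbond ℓ)) (hKdesc (0 + ℓ) hc')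
    have hFcompact : ∀ ℓ, IsCompact (F ℓ) := fun ℓ => (hFclosed ℓ).isCompact
    obtain ⟨c, hc⟩ := IsCompact.nonempty_iInter_of_sequence_nonempty_isCompact_isClosed
      F hFsub hFne (hFcompact 0) hFclosed
    rw [Set.mem_iInter] at hc
    have hcD : c ∈ D := by
      apply hVD
      intro m
      have hgm : (gs m : C) ∈ V (0 + m) := hGlleV (0 + m) (Subgroup.mem_subgroupOf.mp (hgs1 m))
      have h5 : c = (gs m : C) * ((gs m : C)⁻¹ * c) := by group
      have h6 : c ∈ V (0 + m) := by
        rw [h5]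
        exact (V (0 + m)).mul_mem hgm (hKleV (0 + m) (hc m))
      simpa [Nat.zero_add] using h6
    refine ⟨⟨c, hcD⟩, ?_⟩
    apply Subtype.ext
    funext ℓ
    show φfun ⟨c, hcD⟩ ℓ = x.1 ℓ
    rw [← hgs2 ℓ]
    exact hR ⟨c, hcD⟩ (0 + ℓ) (gs ℓ) (hc ℓ)
  let e : ↥D ≃* ↥(Disc Gl hdesc 0) := MulEquiv.ofBijective φ ⟨hinj, hsurj⟩
  -- local constancy of the coordinates
  have hlc : ∀ ℓ : ℕ, IsLocallyConstant (fun d : ↥D => φfun d ℓ) := by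
    intro ℓ
    rw [IsLocallyConstant.iff_exists_open]
    intro d
    refine ⟨{y : ↥D | ((d : C))⁻¹ * (y : C) ∈ K (0 + ℓ)}, ?_,
      show ((d : C))⁻¹ * (d : C) ∈ K (0 + ℓ) by rw [inv_mul_cancel]; exact (K (0 + ℓ)).one_mem,
      ?_⟩
    · exact (hKopen (0 + ℓ)).preimage (continuous_const.mul continuous_subtype_val)
    · intro y hy
      have hy' : (d : C)⁻¹ * (y : C) ∈ K (0 + ℓ) := hy
      show QuotientGroup.mk (gfun y (0 + ℓ)) = QuotientGroup.mk (gfun d (0 + ℓ))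
      apply hR
      have key : ((gfun d (0 + ℓ) : ↥(Gl 0)) : C)⁻¹ * (y : C) =
          (((gfun d (0 + ℓ) : ↥(Gl 0)) : C)⁻¹ * (d : C)) * ((d : C)⁻¹ * (y : C)) := by group
      rw [key]
      exact (K (0 + ℓ)).mul_mem (hgfun2 d (0 + ℓ)) hy'
  refine ⟨e, ?_, ?_⟩
  · -- forward continuity
    have : @Continuous _ _ _ (TopologicalSpace.induced
        (fun x : ↥(Disc Gl hdesc 0) => (x : ∀ ℓ : ℕ, Qgrp Gl 0 (0 + ℓ)))
        (@Pi.topologicalSpace ℕ (fun ℓ => Qgrp Gl 0 (0 + ℓ)) (fun _ => ⊥))) ⇑e :=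
      continuous_into_induced_pi_bot _ _ (fun ℓ => hlc ℓ)
    exact this
  · -- backward continuity
    have hT2 : @T2Space ↥(Disc Gl hdesc 0) (discTopology Gl hdesc 0) :=
      t2space_induced_pi_bot _ Subtype.val_injective
    haveI : CompactSpace ↥D := isCompact_iff_compactSpace.mp (hDclosed.isCompact)
    have hcont : @Continuous _ _ _ (discTopology Gl hdesc 0) ⇑e.toEquiv :=
      continuous_into_induced_pi_bot _ _ (fun ℓ => hlc ℓ)
    exact continuous_symm_of_equiv_compact_to_t2 hT2 e.toEquiv hcont
end

section
/- Let C be a profinite group, let G ⊆ C be a finitely generated dense subgroup, and let D ⊆ C be a closed subgroup of infinite index such that ⋂_{k∈U} k D k⁻¹ = {e} for every clopen neighborhood U of the identity in C. Choose a decreasing sequence {U_ℓ}_{ℓ≥1} of open normal subgroups of C with ⋂_{ℓ} U_ℓ = {e}, and set G_0 = G and G_ℓ = G ∩ (D·U_ℓ) for ℓ ≥ 1. Then {G_ℓ}_{ℓ≥0} is a group chain in G, and for every n ≥ 0 the discriminant group lim←_{ℓ≥n} G_ℓ/E_{n,ℓ} of the truncated chain {G_ℓ}_{ℓ≥n} is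 isomorphic to D as a topological group; in particular the chain is stable with constant discriminant group D. -/
section AuxLemmas

variable {C : Type*} [Group C]

theorem coreIn_le {H K : Subgroup C} : coreIn H K ≤ K := fun x hx => by
  simpa using mem_coreIn.mp hx 1 H.one_mem

theorem coreIn_conj_mem {H K : Subgroup C} {x h : C} (hx : x ∈ coreIn H K) (hh : h ∈ H) :
    h * x * h⁻¹ ∈ coreIn H K := by
  rw [mem_coreIn] at hx ⊢
  intro g hg
  have := hx (h⁻¹ * g) (H.mul_mem (H.inv_mem hh) hg)
  have e : (h⁻¹ * g)⁻¹ * x * (h⁻¹ * g) = g⁻¹ * (h * x * h⁻¹) * g := by group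
  rwa [e] at this

/-- The quotient of `V n` by the (normal) core of `V ℓ` in `V n`. -/
abbrev QV (Vn Vl : Subgroup C) := ↥Vn ⧸ (coreIn Vn Vl).subgroupOf Vn

/-- The homomorphism `G_n/E_{n,ℓ} → V_n / core_{V_n}(V_ℓ)` induced by inclusion. -/
def qToQV (G V : ℕ → Subgroup C) (n ℓ : ℕ) (h : G n ≤ V n)
    (hE : coreIn (G n) (G ℓ) ≤ coreIn (V n) (V ℓ)) :
    Qgrp G n ℓ →* QV (V n) (V ℓ) :=
  QuotientGroup.lift _
    ((QuotientGroup.mk' ((coreIn (V n) (V ℓ)).subgroupOf (V n))).comp (Subgroup.inclusion h))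
    (by
      intro x hx
      rw [Subgroup.mem_subgroupOf] at hx
      have hx' : (Subgroup.inclusion h x : ↥(V n)) ∈ (coreIn (V n) (V ℓ)).subgroupOf (V n) := by
        rw [Subgroup.mem_subgroupOf]
        exact hE hx
      simpa using (QuotientGroup.eq_one_iff _).mpr hx')

theorem qToQV_mk (G V : ℕ → Subgroup C) (n ℓ : ℕ) (h : G n ≤ V n)
    (hE : coreIn (G n) (G ℓ) ≤ coreIn (V n) (V ℓ)) (x : ↥(G n)) :
    qToQV G V n ℓ h hE (QuotientGroup.mk x) = QuotientGroup.mk (Subgroup.inclusion h x) :=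
  rfl

theorem qToQV_injective (G V : ℕ → Subgroup C) (n ℓ : ℕ) (h : G n ≤ V n)
    (hE : coreIn (G n) (G ℓ) ≤ coreIn (V n) (V ℓ))
    (hE2 : ∀ x : C, x ∈ G n → x ∈ coreIn (V n) (V ℓ) → x ∈ coreIn (G n) (G ℓ)) :
    Function.Injective (qToQV G V n ℓ h hE) := by
  rw [← MonoidHom.ker_eq_bot_iff, eq_bot_iff]
  intro q hq
  obtain ⟨g, rfl⟩ := QuotientGroup.mk'_surjective _ q
  rw [MonoidHom.mem_ker] at hq
  rw [QuotientGroup.mk'_apply, qToQV_mk] at hq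
  have h1 : (Subgroup.inclusion h g : ↥(V n)) ∈ (coreIn (V n) (V ℓ)).subgroupOf (V n) :=
    (QuotientGroup.eq_one_iff _).mp hq
  rw [Subgroup.mem_subgroupOf] at h1
  have h2 : (g : C) ∈ coreIn (G n) (G ℓ) := hE2 _ g.2 h1
  have : (g : ↥(G n)) ∈ (coreIn (G n) (G ℓ)).subgroupOf (G n) := by
    rw [Subgroup.mem_subgroupOf]; exact h2
  simpa using (QuotientGroup.eq_one_iff _).mpr this

theorem qToQV_surjective (G V : ℕ → Subgroup C) (n ℓ : ℕ) (h : G n ≤ V n)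
    (hE : coreIn (G n) (G ℓ) ≤ coreIn (V n) (V ℓ))
    (hd : ∀ v : C, v ∈ V n → ∃ g, g ∈ G n ∧ v⁻¹ * g ∈ coreIn (V n) (V ℓ)) :
    Function.Surjective (qToQV G V n ℓ h hE) := by
  intro y
  obtain ⟨v, rfl⟩ := QuotientGroup.mk'_surjective _ y
  obtain ⟨g, hg, hvg⟩ := hd (v : C) v.2
  refine ⟨QuotientGroup.mk ⟨g, hg⟩, ?_⟩
  rw [qToQV_mk, QuotientGroup.mk'_apply]
  rw [QuotientGroup.eq, Subgroup.mem_subgroupOf]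
  have hcoe : ((Subgroup.inclusion h ⟨g, hg⟩ : ↥(V n)) : C) = g := rfl
  have := (coreIn (V n) (V ℓ)).inv_mem hvg
  rw [mul_inv_rev, inv_inv] at this
  simpa [hcoe] using this

end AuxLemmas

/-- **Proposition 9.5.** Let `C` be a profinite group, `G ⊆ C` a finitely generated dense
subgroup, and `D ⊆ C` a closed subgroup of infinite index such that
`⋂_{k ∈ U} k D k⁻¹ = {e}` for every clopen neighborhood `U` of the identity in `C`.
Choose a decreasing sequence `{U_ℓ}` of open normal subgroups of `C` with `⋂_ℓ U_ℓ = {e}`,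
and set `G_0 = G`, `G_ℓ = G ∩ (D·U_ℓ)` for `ℓ ≥ 1` (here `D·U_ℓ = D ⊔ U_ℓ`, since `U_ℓ` is
normal).  Then `{G_ℓ}` is a group chain in `G` and for every `n` the discriminant group of
the truncated chain `{G_ℓ}_{ℓ ≥ n}` is isomorphic to `D` as a topological group; in
particular the chain is stable with constant discriminant group `D`. -/
theorem lenstra_construction_stable
    {C : Type*} [Group C] [TopologicalSpace C] [IsTopologicalGroup C]
    [CompactSpace C] [T2Space C] [TotallyDisconnectedSpace C]
    (G : Subgroup C) (hGfg : Group.FG ↥G) (hGdense : Dense (G : Set C))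
    (D : Subgroup C) (hDclosed : IsClosed (D : Set C)) (hDindex : D.index = 0)
    (hDcore : ∀ U : Set C, IsClopen U → (1 : C) ∈ U →
      (⨅ k ∈ U, conjSub k D) = ⊥)
    (U : ℕ → Subgroup C)
    (hUopen : ∀ ℓ, IsOpen (U ℓ : Set C))
    (hUnormal : ∀ ℓ, (U ℓ).Normal)
    (hUdec : ∀ ℓ, U (ℓ + 1) ≤ U ℓ)
    (hUint : (⨅ ℓ : ℕ, U ℓ) = ⊥)
    (Gl : ℕ → Subgroup C)
    (hGl0 : Gl 0 = G)
    (hGldef : ∀ ℓ, 1 ≤ ℓ → Gl ℓ = G ⊓ (D ⊔ U ℓ)) :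
    ∃ hdesc : ∀ ℓ, Gl (ℓ + 1) ≤ Gl ℓ,
      (∀ ℓ, ((Gl ℓ).subgroupOf G).FiniteIndex) ∧
      ∀ n : ℕ, ∃ e : ↥D ≃* ↥(Disc Gl hdesc n),
        @Continuous _ _ inferInstance (discTopology Gl hdesc n) ⇑e ∧
        @Continuous _ _ (discTopology Gl hdesc n) inferInstance ⇑e.symm := by
  classical
  -- the chain `V` of clopen subgroups of `C`
  set V : ℕ → Subgroup C := fun ℓ => if ℓ = 0 then ⊤ else D ⊔ U ℓ with hVdef
  have hV0 : V 0 = ⊤ := by simp [hVdef]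
  have hVpos : ∀ ℓ, 0 < ℓ → V ℓ = D ⊔ U ℓ := by
    intro ℓ hl
    simp [hVdef, Nat.pos_iff_ne_zero.mp hl]
  have hGlV : ∀ ℓ, Gl ℓ = G ⊓ V ℓ := by
    intro ℓ
    rcases Nat.eq_zero_or_pos ℓ with h | h
    · subst h; rw [hGl0, hV0, inf_top_eq]
    · rw [hGldef ℓ h, hVpos ℓ h]
  have hDleV : ∀ ℓ, D ≤ V ℓ := by
    intro ℓ
    rcases Nat.eq_zero_or_pos ℓ with h | h
    · subst h; rw [hV0]; exact le_top
    · rw [hVpos ℓ h]; exact le_sup_left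
  have hUleV : ∀ ℓ, 0 < ℓ → U ℓ ≤ V ℓ := by
    intro ℓ h
    rw [hVpos ℓ h]; exact le_sup_right
  have hVdec : ∀ ℓ, V (ℓ + 1) ≤ V ℓ := by
    intro ℓ
    rcases Nat.eq_zero_or_pos ℓ with h | h
    · subst h; rw [hV0]; exact le_top
    · rw [hVpos _ h, hVpos _ (Nat.succ_pos ℓ)]
      exact sup_le_sup_left (hUdec ℓ) D
  have hVanti : Antitone V := antitone_nat_of_succ_le hVdec
  have hVopen : ∀ ℓ, IsOpen (V ℓ : Set C) := by
    intro ℓ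
    rcases Nat.eq_zero_or_pos ℓ with h | h
    · subst h; rw [hV0]; simpa using isOpen_univ
    · exact Subgroup.isOpen_mono (hUleV ℓ h) (hUopen ℓ)
  have hVclosed : ∀ ℓ, IsClosed (V ℓ : Set C) := fun ℓ =>
    Subgroup.isClosed_of_isOpen _ (hVopen ℓ)
  have hUclosed : ∀ ℓ, IsClosed (U ℓ : Set C) := fun ℓ =>
    Subgroup.isClosed_of_isOpen _ (hUopen ℓ)
  -- an element of every `V ℓ` lies in `D`
  have hVD : ∀ x : C, (∀ ℓ, x ∈ V ℓ) → x ∈ D := by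
    intro x hx
    set S : ℕ → Set C := fun ℓ => (D : Set C) ∩ (fun y => x⁻¹ * y) ⁻¹' (U (ℓ + 1)) with hS
    have hSne : ∀ ℓ, (S ℓ).Nonempty := by
      intro ℓ
      have hx' := hx (ℓ + 1)
      rw [hVpos _ (Nat.succ_pos ℓ)] at hx'
      haveI := hUnormal (ℓ + 1)
      have hx'' : x ∈ (↑(D ⊔ U (ℓ + 1)) : Set C) := hx'
      rw [Subgroup.mul_normal, Set.mem_mul] at hx''
      obtain ⟨d, hd, u, hu, hdu⟩ := hx''
      refine ⟨d, hd, ?_⟩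
      have : x⁻¹ * d = u⁻¹ := by rw [← hdu]; group
      simp only [Set.mem_preimage, this, SetLike.mem_coe]
      exact (U (ℓ + 1)).inv_mem hu
    have hSdec : ∀ ℓ, S (ℓ + 1) ⊆ S ℓ := fun ℓ y hy => ⟨hy.1, hUdec (ℓ + 1) hy.2⟩
    have hSclosed : ∀ ℓ, IsClosed (S ℓ) := fun ℓ =>
      hDclosed.inter ((hUclosed (ℓ + 1)).preimage (continuous_const.mul continuous_id))
    obtain ⟨d, hd⟩ := IsCompact.nonempty_iInter_of_sequence_nonempty_isCompact_isClosed S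
      hSdec hSne ((hSclosed 0).isCompact) hSclosed
    simp only [Set.mem_iInter] at hd
    have hdD : d ∈ D := (hd 0).1
    have hbot : x⁻¹ * d ∈ ⨅ ℓ, U ℓ := by
      rw [Subgroup.mem_iInf]
      intro ℓ
      cases ℓ with
      | zero => exact hUdec 0 (hd 0).2
      | succ m => exact hUdec (m + 1) (hd (m + 1)).2
    rw [hUint, Subgroup.mem_bot] at hbot
    have : d = x := by
      have := congrArg (fun z => x * z) hbot
      simpa [mul_assoc] using this
    rwa [this] at hdD
  -- density of `Gl m` in `V m`
  have hdense : ∀ (m : ℕ) (N : Subgroup C), IsOpen (N : Set C) → N ≤ V m →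
      ∀ v : C, v ∈ V m → ∃ g, g ∈ Gl m ∧ v⁻¹ * g ∈ N := by
    intro m N hNopen hNle v hv
    have hWopen : IsOpen ((fun y => v⁻¹ * y) ⁻¹' (N : Set C)) :=
      hNopen.preimage (continuous_const.mul continuous_id)
    have hWne : ((fun y => v⁻¹ * y) ⁻¹' (N : Set C)).Nonempty := ⟨v, by simpa using N.one_mem⟩
    obtain ⟨g, hgG, hgW⟩ := hGdense.exists_mem_open hWopen hWne
    refine ⟨g, ?_, hgW⟩
    rw [hGlV m]
    refine ⟨hgG, ?_⟩
    have hgv : g = v * (v⁻¹ * g) := by group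
    rw [hgv]
    exact (V m).mul_mem hv (hNle hgW)
  -- openness of the cores
  have hcoreTop : ∀ n, coreIn (V n) (V 0) = ⊤ := by
    intro n
    rw [eq_top_iff]
    intro x _
    rw [mem_coreIn]
    intro h _
    rw [hV0]
    trivial
  have hUleCore : ∀ n m, 0 < m → U m ≤ coreIn (V n) (V m) := by
    intro n m hm u hu
    rw [mem_coreIn]
    intro k _
    refine hUleV m hm ?_
    simpa using (hUnormal m).conj_mem u hu k⁻¹
  have hcoreOpen : ∀ n m, IsOpen (coreIn (V n) (V m) : Set C) := by
    intro n m
    rcases Nat.eq_zero_or_pos m with h | h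
    · subst h; rw [hcoreTop]; simpa using isOpen_univ
    · exact Subgroup.isOpen_mono (hUleCore n m h) (hUopen m)
  have hcoreClosed : ∀ n m, IsClosed (coreIn (V n) (V m) : Set C) := fun n m =>
    Subgroup.isClosed_of_isOpen _ (hcoreOpen n m)
  -- the chain is descending
  have hdesc : ∀ ℓ, Gl (ℓ + 1) ≤ Gl ℓ := by
    intro ℓ
    rw [hGlV, hGlV]
    exact inf_le_inf_left G (hVdec ℓ)
  have hGlanti : ∀ {a b : ℕ}, a ≤ b → Gl b ≤ Gl a := by
    intro a b hab
    rw [hGlV, hGlV]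
    exact inf_le_inf_left G (hVanti hab)
  -- finite index
  have hfin : ∀ ℓ, ((Gl ℓ).subgroupOf G).FiniteIndex := by
    intro ℓ
    have hsub : (Gl ℓ).subgroupOf G = (V ℓ).subgroupOf G := by
      rw [hGlV]
      ext x
      simp [Subgroup.mem_subgroupOf, x.2]
    rw [hsub]
    constructor
    rcases Nat.eq_zero_or_pos ℓ with h | h
    · subst h
      rw [hV0]
      have : (⊤ : Subgroup C).subgroupOf G = ⊤ := by
        ext x; simp [Subgroup.mem_subgroupOf]
      rw [this, Subgroup.index_top]
      exact one_ne_zero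
    · haveI := hUnormal ℓ
      haveI : Finite (C ⧸ U ℓ) := Subgroup.quotient_finite_of_isOpen (U ℓ) (hUopen ℓ)
      haveI : (U ℓ).FiniteIndex := Subgroup.finiteIndex_of_finite_quotient (H := U ℓ)
      have hdvd1 : (V ℓ).relIndex G ∣ (U ℓ).relIndex G :=
        Subgroup.relIndex_dvd_of_le_left G (hUleV ℓ h)
      have hdvd2 : (U ℓ).relIndex G ∣ (U ℓ).index :=
        Subgroup.relIndex_dvd_index_of_normal (U ℓ) G
      have hne : (U ℓ).index ≠ 0 := Subgroup.FiniteIndex.index_ne_zero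
      intro hc
      have : (V ℓ).relIndex G = 0 := hc
      exact hne (eq_zero_of_zero_dvd (this ▸ hdvd1.trans hdvd2))
  refine ⟨hdesc, hfin, ?_⟩
  intro n
  have hGleVn : ∀ m, Gl m ≤ V m := fun m => by rw [hGlV]; exact inf_le_right
  -- the key core comparison
  have hEkey : ∀ ℓ, coreIn (Gl n) (Gl ℓ) ≤ coreIn (V n) (V ℓ) := by
    intro ℓ x hx
    rw [mem_coreIn] at hx ⊢
    intro k hk
    by_contra hcon
    have hAclosed : IsClosed ((fun y => y⁻¹ * x * y) ⁻¹' (V ℓ : Set C)) :=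
      (hVclosed ℓ).preimage (((continuous_inv.mul continuous_const)).mul continuous_id)
    have hWopen : IsOpen ((V n : Set C) ∩ ((fun y => y⁻¹ * x * y) ⁻¹' (V ℓ : Set C))ᶜ) :=
      (hVopen n).inter hAclosed.isOpen_compl
    have hWne : ((V n : Set C) ∩ ((fun y => y⁻¹ * x * y) ⁻¹' (V ℓ : Set C))ᶜ).Nonempty :=
      ⟨k, hk, hcon⟩
    obtain ⟨g, hgG, hgW⟩ := hGdense.exists_mem_open hWopen hWne
    have hgGl : g ∈ Gl n := by
      rw [hGlV]
      exact ⟨hgG, hgW.1⟩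
    exact hgW.2 (hGleVn ℓ (hx g hgGl))
  have hE2 : ∀ ℓ, ∀ x : C, x ∈ Gl n → x ∈ coreIn (V n) (V ℓ) → x ∈ coreIn (Gl n) (Gl ℓ) := by
    intro ℓ x hxn hx
    rw [mem_coreIn] at hx ⊢
    intro g hg
    rw [hGlV]
    have hxG : x ∈ G := by rw [hGlV] at hxn; exact hxn.1
    have hgGG : g ∈ G := by rw [hGlV] at hg; exact hg.1
    exact ⟨G.mul_mem (G.mul_mem (G.inv_mem hgGG) hxG) hgGG, hx g (hGleVn n hg)⟩
  -- the comparison isomorphisms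
  have hbij : ∀ k, Function.Bijective (qToQV Gl V n (n + k) (hGleVn n) (hEkey (n + k))) := by
    intro k
    constructor
    · exact qToQV_injective Gl V n (n + k) (hGleVn n) (hEkey (n + k)) (hE2 (n + k))
    · refine qToQV_surjective Gl V n (n + k) (hGleVn n) (hEkey (n + k)) ?_
      intro v hv
      exact hdense n (coreIn (V n) (V (n + k))) (hcoreOpen n (n + k))
        (le_trans coreIn_le (hVanti (Nat.le_add_right n k))) v hv
  let eqv : ∀ k, Qgrp Gl n (n + k) ≃* QV (V n) (V (n + k)) := fun k =>
    MulEquiv.ofBijective _ (hbij k)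
  -- the components of the comparison map
  let φ : ∀ k, ↥D →* Qgrp Gl n (n + k) := fun k =>
    (eqv k).symm.toMonoidHom.comp
      ((QuotientGroup.mk' ((coreIn (V n) (V (n + k))).subgroupOf (V n))).comp
        (Subgroup.inclusion (hDleV n)))
  have hφ_eq : ∀ (k : ℕ) (d : ↥D) (a : ↥(Gl n)),
      φ k d = QuotientGroup.mk a ↔ (d : C)⁻¹ * (a : C) ∈ coreIn (V n) (V (n + k)) := by
    intro k d a
    show (eqv k).symm _ = _ ↔ _
    rw [MulEquiv.symm_apply_eq]
    have he : eqv k (QuotientGroup.mk a)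
        = QuotientGroup.mk (Subgroup.inclusion (hGleVn n) a) := rfl
    rw [he]
    simp only [MonoidHom.comp_apply, QuotientGroup.mk'_apply]
    rw [QuotientGroup.eq, Subgroup.mem_subgroupOf]
    simp [Subgroup.coe_inclusion]
  have hcoreMono : ∀ k, coreIn (V n) (V (n + (k + 1))) ≤ coreIn (V n) (V (n + k)) :=
    fun k => coreIn_mono (hVanti (by omega))
  have hmem_iff : ∀ x : ∀ ℓ : ℕ, Qgrp Gl n (n + ℓ), x ∈ Disc Gl hdesc n ↔
      (∀ ℓ, x ℓ ∈ imgSub Gl n (n + ℓ)) ∧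
        ∀ ℓ, bond Gl hdesc n (n + ℓ) (x (ℓ + 1)) = x ℓ := fun x => Iff.rfl
  -- membership of the comparison map in the discriminant group
  have hmemD : ∀ d : ↥D, (fun k => φ k d) ∈ Disc Gl hdesc n := by
    intro d
    refine (hmem_iff _).mpr ⟨?_, ?_⟩
    · intro k
      show φ k d ∈ imgSub Gl n (n + k)
      obtain ⟨g, hg, hdg⟩ := hdense (n + k) (coreIn (V n) (V (n + k)))
        (hcoreOpen n (n + k)) coreIn_le (d : C) (hDleV (n + k) d.2)
      refine Subgroup.mem_map.mpr ⟨⟨g, hGlanti (Nat.le_add_right n k) hg⟩, ?_, ?_⟩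
      · rw [Subgroup.mem_subgroupOf]; exact hg
      · rw [QuotientGroup.mk'_apply]
        exact ((hφ_eq k d ⟨g, hGlanti (Nat.le_add_right n k) hg⟩).mpr hdg).symm
    · intro k
      show bond Gl hdesc n (n + k) (φ (k + 1) d) = φ k d
      obtain ⟨a, ha⟩ := QuotientGroup.mk'_surjective _ (φ (k + 1) d)
      rw [QuotientGroup.mk'_apply] at ha
      have h1 : (d : C)⁻¹ * (a : C) ∈ coreIn (V n) (V (n + (k + 1))) :=
        (hφ_eq (k + 1) d a).mp ha.symm
      have h2 : φ k d = QuotientGroup.mk a :=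
        (hφ_eq k d a).mpr (hcoreMono k h1)
      rw [← ha, h2]
      rfl
  -- the comparison map
  let Φ : ↥D →* ↥(Disc Gl hdesc n) :=
    MonoidHom.codRestrict (Pi.monoidHom φ) (Disc Gl hdesc n) hmemD
  have hVnClopen : IsClopen (V n : Set C) := ⟨hVclosed n, hVopen n⟩
  -- injectivity
  have hΦinj : Function.Injective Φ := by
    refine (injective_iff_map_eq_one Φ).mpr ?_
    intro d hd
    have hdcore : ∀ k, (d : C) ∈ coreIn (V n) (V (n + k)) := by
      intro k
      have h0 : φ k d = 1 := congrFun (congrArg Subtype.val hd) k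
      have h1 : (d : C)⁻¹ * ((1 : ↥(Gl n)) : C) ∈ coreIn (V n) (V (n + k)) :=
        (hφ_eq k d 1).mp h0
      rw [OneMemClass.coe_one, mul_one] at h1
      simpa using (coreIn (V n) (V (n + k))).inv_mem h1
    have hdmem : ∀ h ∈ V n, h⁻¹ * (d : C) * h ∈ D := by
      intro h hh
      apply hVD
      intro ℓ
      exact hVanti (Nat.le_add_left ℓ n) (mem_coreIn.mp (hdcore ℓ) h hh)
    have hbot : (d : C) ∈ (⊥ : Subgroup C) := by
      rw [← hDcore (V n) hVnClopen ((V n).one_mem)]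
      rw [Subgroup.mem_iInf]
      intro k
      rw [Subgroup.mem_iInf]
      intro hk
      rw [mem_conjSub]
      exact hdmem k hk
    rw [Subgroup.mem_bot] at hbot
    exact Subtype.ext hbot
  -- surjectivity
  have hΦsurj : Function.Surjective Φ := by
    intro x
    have hx := (hmem_iff _).mp x.2
    choose g hg1 hg2 using fun k => Subgroup.mem_map.mp (hx.1 k)
    have hstep : ∀ k, ((g k : C))⁻¹ * (g (k + 1) : C) ∈ coreIn (V n) (V (n + k)) := by
      intro k
      have hb : bond Gl hdesc n (n + k) ((x : ∀ k, Qgrp Gl n (n + k)) (k + 1))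
          = (x : ∀ k, Qgrp Gl n (n + k)) k := hx.2 k
      rw [← hg2 k, ← hg2 (k + 1)] at hb
      rw [QuotientGroup.mk'_apply, QuotientGroup.mk'_apply] at hb
      have hb2 : (QuotientGroup.mk (g (k + 1)) : Qgrp Gl n (n + k)) = QuotientGroup.mk (g k) := by
        rw [← hb]
        rfl
      have h3 := QuotientGroup.eq.mp hb2.symm
      rw [Subgroup.mem_subgroupOf] at h3
      exact hEkey (n + k) (by simpa using h3)
    set T : ℕ → Set C :=
      fun k => (fun y => (g k : C)⁻¹ * y) ⁻¹' (coreIn (V n) (V (n + k)) : Set C) with hT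
    have hTne : ∀ k, (T k).Nonempty := by
      intro k
      refine ⟨(g k : C), ?_⟩
      show (g k : C)⁻¹ * (g k : C) ∈ coreIn (V n) (V (n + k))
      simpa using (coreIn (V n) (V (n + k))).one_mem
    have hTdec : ∀ k, T (k + 1) ⊆ T k := by
      intro k y hy
      show (g k : C)⁻¹ * y ∈ coreIn (V n) (V (n + k))
      have h1 : (g k : C)⁻¹ * y
          = ((g k : C)⁻¹ * (g (k + 1) : C)) * ((g (k + 1) : C)⁻¹ * y) := by group
      rw [h1]
      exact (coreIn (V n) (V (n + k))).mul_mem (hstep k) (hcoreMono k hy)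
    have hTclosed : ∀ k, IsClosed (T k) := fun k =>
      (hcoreClosed n (n + k)).preimage (continuous_const.mul continuous_id)
    obtain ⟨d, hd⟩ := IsCompact.nonempty_iInter_of_sequence_nonempty_isCompact_isClosed T
      hTdec hTne ((hTclosed 0).isCompact) hTclosed
    simp only [Set.mem_iInter] at hd
    have hdD : d ∈ D := by
      apply hVD
      intro ℓ
      refine hVanti (Nat.le_add_left ℓ n) ?_
      have h1 : (g ℓ : C) ∈ V (n + ℓ) := by
        have h := hg1 ℓ
        rw [Subgroup.mem_subgroupOf] at h
        exact hGleVn (n + ℓ) h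
      have h3 : d = (g ℓ : C) * ((g ℓ : C)⁻¹ * d) := by group
      rw [h3]
      exact (V (n + ℓ)).mul_mem h1 (coreIn_le (hd ℓ))
    refine ⟨⟨d, hdD⟩, ?_⟩
    apply Subtype.ext
    funext k
    show φ k ⟨d, hdD⟩ = (x : ∀ k, Qgrp Gl n (n + k)) k
    rw [← hg2 k, QuotientGroup.mk'_apply]
    refine (hφ_eq k ⟨d, hdD⟩ (g k)).mpr ?_
    have h5 := (coreIn (V n) (V (n + k))).inv_mem (hd k)
    rw [mul_inv_rev, inv_inv] at h5
    exact h5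
  let e : ↥D ≃* ↥(Disc Gl hdesc n) := MulEquiv.ofBijective Φ ⟨hΦinj, hΦsurj⟩
  haveI hDcompact : CompactSpace ↥D := isCompact_iff_compactSpace.mp hDclosed.isCompact
  -- continuity of the components
  have hφcont : ∀ k, @Continuous _ _ _ ⊥ (fun d : ↥D => φ k d) := by
    intro k
    letI : TopologicalSpace (Qgrp Gl n (n + k)) := ⊥
    haveI : DiscreteTopology (Qgrp Gl n (n + k)) := ⟨rfl⟩
    refine continuous_discrete_rng.mpr ?_
    intro q
    obtain ⟨a, ha⟩ := QuotientGroup.mk'_surjective _ q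
    have hset : (fun d : ↥D => φ k d) ⁻¹' {q} =
        Subtype.val ⁻¹' ((fun y : C => y⁻¹ * (a : C)) ⁻¹' (coreIn (V n) (V (n + k)) : Set C)) := by
      ext d
      simp only [Set.mem_preimage, Set.mem_singleton_iff, SetLike.mem_coe]
      rw [← ha, QuotientGroup.mk'_apply]
      exact hφ_eq k d a
    rw [hset]
    exact ((hcoreOpen n (n + k)).preimage
      (continuous_inv.mul continuous_const)).preimage continuous_subtype_val
  -- continuity of the comparison map
  have hecont : @Continuous _ _ _ (discTopology Gl hdesc n) ⇑e := by
    letI : ∀ k : ℕ, TopologicalSpace (Qgrp Gl n (n + k)) := fun _ => ⊥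
    refine continuous_induced_rng.mpr (continuous_pi ?_)
    intro k
    exact hφcont k
  -- the discriminant topology is Hausdorff
  have hdiscT2 : @T2Space _ (discTopology Gl hdesc n) := by
    refine @T2Space.mk _ (discTopology Gl hdesc n) ?_
    intro x y hxy
    have hne : ∃ k, (x : ∀ k, Qgrp Gl n (n + k)) k ≠ (y : ∀ k, Qgrp Gl n (n + k)) k := by
      by_contra hcc
      push_neg at hcc
      exact hxy (Subtype.ext (funext hcc))
    obtain ⟨k, hk⟩ := hne
    have hopen : ∀ q : Qgrp Gl n (n + k),
        @IsOpen _ (discTopology Gl hdesc n)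
          {z : ↥(Disc Gl hdesc n) | (z : ∀ k, Qgrp Gl n (n + k)) k = q} := by
      intro q
      letI : ∀ k : ℕ, TopologicalSpace (Qgrp Gl n (n + k)) := fun _ => ⊥
      haveI : DiscreteTopology (Qgrp Gl n (n + k)) := ⟨rfl⟩
      have h1 : IsOpen ((fun w : ∀ k, Qgrp Gl n (n + k) => w k) ⁻¹' {q}) :=
        (continuous_apply k).isOpen_preimage _ (isOpen_discrete _)
      exact isOpen_induced_iff.mpr ⟨_, h1, rfl⟩
    refine ⟨_, _, hopen ((x : ∀ k, Qgrp Gl n (n + k)) k),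
      hopen ((y : ∀ k, Qgrp Gl n (n + k)) k), rfl, rfl, ?_⟩
    rw [Set.disjoint_left]
    intro z hz1 hz2
    refine hk ?_
    rw [← hz1]
    exact hz2
  refine ⟨e, hecont, ?_⟩
  exact @Continuous.continuous_symm_of_equiv_compact_to_t2 ↥D ↥(Disc Gl hdesc n) _
    (discTopology Gl hdesc n) hDcompact hdiscT2 e.toEquiv hecont
end

section
/- Let {G_ℓ}_{ℓ≥0} be a descending chain of subgroups of a group G₀ with kernel K = ⋂_{ℓ≥0} G_ℓ. Suppose there exists g ∈ K such that for every n ≥ 0 there is h ∈ G_n with h⁻¹ g h ∉ K (i.e. g has non-trivial germinal holonomy). Then for every n ≥ 0 there exists ℓ ≥ n with g ∉ E_{n,ℓ}, and the sequence (g·E_{n,ℓ})_{ℓ≥n} is a well-defined non-identity element of the discriminant group D^n = lim←_{ℓ≥n} G_ℓ/E_{n,ℓ}; in particular D^n is a non-trivial group for every n ≥ 0. -/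
/-- **Theorem 1.8 / Proposition 7.10.** Let `{G_ℓ}_{ℓ ≥ 0}` be a descending chain of
subgroups of `G₀` with kernel `K = ⋂_ℓ G_ℓ`, and let `g ∈ K` have non-trivial germinal
holonomy: for every `n` there is `h ∈ G_n` with `h⁻¹ g h ∉ K`.  Then for every `n` there
is `ℓ ≥ n` with `g ∉ E_{n,ℓ}`, and the sequence of cosets `(g·E_{n,ℓ})_ℓ` is a
well-defined non-identity element of the discriminant group
`D^n = lim←_{ℓ ≥ n} G_ℓ/E_{n,ℓ}`; in particular `D^n` is non-trivial for every `n`. -/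
theorem nontrivial_holonomy_nontrivial_discriminant
    {G₀ : Type*} [Group G₀] (Gc : ℕ → Subgroup G₀)
    (hdesc : ∀ ℓ, Gc (ℓ + 1) ≤ Gc ℓ)
    (g : G₀) (hgK : g ∈ (⨅ ℓ : ℕ, Gc ℓ))
    (hhol : ∀ n : ℕ, ∃ h ∈ Gc n, h⁻¹ * g * h ∉ (⨅ ℓ : ℕ, Gc ℓ)) :
    ∀ n : ℕ,
      (∃ ℓ : ℕ, n ≤ ℓ ∧ g ∉ coreIn (Gc n) (Gc ℓ)) ∧
      (fun ℓ : ℕ => (QuotientGroup.mk (⟨g, Subgroup.mem_iInf.mp hgK n⟩ : ↥(Gc n)) :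
          Qgrp Gc n (n + ℓ))) ∈ Disc Gc hdesc n ∧
      (fun ℓ : ℕ => (QuotientGroup.mk (⟨g, Subgroup.mem_iInf.mp hgK n⟩ : ↥(Gc n)) :
          Qgrp Gc n (n + ℓ))) ≠ 1 ∧
      Nontrivial ↥(Disc Gc hdesc n) := by
  have hGle : ∀ {i j : ℕ}, i ≤ j → Gc j ≤ Gc i := by
    intro i j hij
    induction hij with
    | refl => exact le_rfl
    | step _ ih => exact le_trans (hdesc _) ih
  have hgall : ∀ ℓ, g ∈ Gc ℓ := Subgroup.mem_iInf.mp hgK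
  intro n
  -- existence of ℓ ≥ n with g ∉ E_{n,ℓ}
  have hexists : ∃ ℓ : ℕ, n ≤ ℓ ∧ g ∉ coreIn (Gc n) (Gc ℓ) := by
    obtain ⟨h, hh, hout⟩ := hhol n
    rw [Subgroup.mem_iInf] at hout
    push_neg at hout
    obtain ⟨ℓ, hℓ⟩ := hout
    refine ⟨max n ℓ, le_max_left _ _, fun hc => ?_⟩
    exact hℓ (hGle (le_max_right n ℓ) (mem_coreIn.mp hc h hh))
  refine ⟨hexists, ?_, ?_, ?_⟩
  · -- membership in the discriminant group
    refine ⟨fun ℓ => ?_, fun ℓ => rfl⟩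
    exact ⟨⟨g, hgall n⟩, Subgroup.mem_subgroupOf.mpr (hgall (n + ℓ)), rfl⟩
  · -- non-identity
    intro hone
    obtain ⟨ℓ, hnℓ, hg⟩ := hexists
    obtain ⟨k, rfl⟩ := Nat.exists_eq_add_of_le hnℓ
    have := congrFun hone k
    rw [Pi.one_apply, QuotientGroup.eq_one_iff, Subgroup.mem_subgroupOf] at this
    exact hg this
  · -- nontriviality
    refine ⟨⟨(fun ℓ : ℕ => (QuotientGroup.mk (⟨g, hgall n⟩ : ↥(Gc n)) :
        Qgrp Gc n (n + ℓ))), ⟨fun ℓ => ⟨⟨g, hgall n⟩,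
        Subgroup.mem_subgroupOf.mpr (hgall (n + ℓ)), rfl⟩, fun ℓ => rfl⟩⟩, 1, ?_⟩
    intro hone
    obtain ⟨ℓ, hnℓ, hg⟩ := hexists
    obtain ⟨k, rfl⟩ := Nat.exists_eq_add_of_le hnℓ
    have := congrFun (congrArg Subtype.val hone) k
    rw [Subgroup.coe_one, Pi.one_apply, QuotientGroup.eq_one_iff,
      Subgroup.mem_subgroupOf] at this
    exact hg this
end

section
/- Let a group G act by homeomorphisms on a Hausdorff topological space X, and suppose the action is minimal, i.e. every G-orbit is dense in X. Suppose there exists a point x ∈ X whose isotropy subgroup Stab_G(x) = {g ∈ G : g·x = x} is a normal subgroup of G. Then every g ∈ G that acts as the identity on some non-empty open subset of X acts as the identity on all of X; that is, the action is strongly quasi-analytic (SQA). -/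
/-!
Molino theory for matchbox manifolds (Dyer–Hurder–Lukina), key step in the proof of
Theorem 8.9: a minimal action admitting a point whose isotropy group is normal is
strongly quasi-analytic (SQA).
-/

/-- Let a group `G` act by homeomorphisms on a Hausdorff space `X`, with every orbit
dense (a minimal action).  Suppose some point `x` has normal isotropy subgroup
`Stab_G(x) ⊴ G`.  Then every `g ∈ G` acting as the identity on some non-empty open
subset of `X` acts as the identity on all of `X`: the action is SQA. -/
theorem sqa_of_normal_stabilizer
    {G X : Type*} [Group G] [TopologicalSpace X] [T2Space X] [MulAction G X]
    (hcont : ∀ g : G, Continuous fun y : X => g • y)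
    (hmin : ∀ x : X, Dense (MulAction.orbit G x))
    (x : X) (hnormal : (MulAction.stabilizer G x).Normal) :
    ∀ g : G, (∃ U : Set X, IsOpen U ∧ U.Nonempty ∧ ∀ y ∈ U, g • y = y) →
      ∀ y : X, g • y = y := by
  rintro g ⟨U, hU, hUne, hfix⟩ y
  -- The fixed-point set of g is closed
  have hclosed : IsClosed {z : X | g • z = z} :=
    isClosed_eq (hcont g) continuous_id
  -- The orbit of x meets U
  obtain ⟨z, hzorb, hzU⟩ := (hmin x).exists_mem_open hU hUne
  obtain ⟨h, rfl⟩ := hzorb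
  -- g fixes h • x, so h⁻¹ g h ∈ Stab(x)
  have hmem : h⁻¹ * g * h ∈ MulAction.stabilizer G x := by
    have := hfix _ hzU
    simp only [MulAction.mem_stabilizer_iff, mul_smul]
    rw [this, inv_smul_smul]
  -- By normality, g ∈ Stab(x)
  have hg : g ∈ MulAction.stabilizer G x := by
    have := hnormal.conj_mem _ hmem h
    simpa [mul_assoc] using this
  -- g fixes every point of the orbit of x
  have horb : MulAction.orbit G x ⊆ {z : X | g • z = z} := by
    rintro _ ⟨k, rfl⟩
    have hk : k⁻¹ * g * k ∈ MulAction.stabilizer G x := by simpa using hnormal.conj_mem _ hg k⁻¹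
    have := MulAction.mem_stabilizer_iff.mp hk
    simp only [Set.mem_setOf_eq]
    calc g • k • x = k • (k⁻¹ * g * k) • x := by
          simp [mul_smul]
      _ = k • x := by rw [this]
  -- The fixed-point set is closed and contains a dense set
  have hdense : Dense {z : X | g • z = z} := (hmin x).mono horb
  have heq : {z : X | g • z = z} = Set.univ := by
    rw [← hclosed.closure_eq]
    exact hdense.closure_eq
  have : y ∈ {z : X | g • z = z} := heq ▸ Set.mem_univ y
  exact this
end

section
/- Let G be a finitely generated group acting minimally and equicontinuously by homeomorphisms on a Cantor space X, i.e. every G-orbit is dense and the family of homeomorphisms {x ↦ g·x : g ∈ G} is equicontinuous with respect to the unique uniform structure of the compact space X. Suppose x, y ∈ X are points at which the germinal holonomy is locally trivial: there exist open sets U ∋ x and V ∋ y such that every g ∈ Stab_G(x) acts as the identity on U and every g ∈ Stab_G(y) acts as the identity on V. Then the isotropy subgroups Stab_G(x) and Stab_G(y) are conjugate subgroups of G. -/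
/-!
Molino theory for matchbox manifolds (Dyer–Hurder–Lukina), Proposition 7.7
(an algebraic analog of Reeb stability): for an equicontinuous minimal Cantor action,
the isotropy groups of two points with locally trivial germinal holonomy are conjugate.
-/

/-- **Proposition 7.7.** Let a finitely generated group `G` act minimally and
equicontinuously by homeomorphisms on a Cantor space `X` (non-empty, compact,
metrizable, perfect, totally disconnected).  If `x, y ∈ X` are points at which the
germinal holonomy is locally trivial, then `Stab_G(x)` and `Stab_G(y)` are conjugate
subgroups of `G`. -/
theorem conjugate_kernels_of_locally_trivial_holonomy
    {G X : Type*} [Group G] [UniformSpace X] [CompactSpace X] [T2Space X]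
    [TotallyDisconnectedSpace X] [Nonempty X] [TopologicalSpace.MetrizableSpace X]
    [MulAction G X]
    (hperf : Perfect (Set.univ : Set X))
    (hfg : Group.FG G)
    (hcont : ∀ g : G, Continuous fun z : X => g • z)
    (hmin : ∀ z : X, Dense (MulAction.orbit G z))
    (hequi : Equicontinuous fun g : G => fun z : X => g • z)
    (x y : X)
    (hx : ∃ U : Set X, IsOpen U ∧ x ∈ U ∧
      ∀ g ∈ MulAction.stabilizer G x, ∀ z ∈ U, g • z = z)
    (hy : ∃ V : Set X, IsOpen V ∧ y ∈ V ∧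
      ∀ g ∈ MulAction.stabilizer G y, ∀ z ∈ V, g • z = z) :
    ∃ h : G, MulAction.stabilizer G y =
      (MulAction.stabilizer G x).map (MulAut.conj h).toMonoidHom := by
  obtain ⟨U, hUopen, hxU, hUtriv⟩ := hx
  obtain ⟨V, hVopen, hyV, hVtriv⟩ := hy
  -- uniform equicontinuity
  have huni : UniformEquicontinuous fun g : G => fun z : X => g • z :=
    CompactSpace.uniformEquicontinuous_of_equicontinuous hequi
  -- entourage E with ball x E ⊆ U
  obtain ⟨E, hE, hEball⟩ := UniformSpace.mem_nhds_iff.mp (hUopen.mem_nhds hxU)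
  -- entourage D from uniform equicontinuity
  have hD := huni E hE
  rw [Filter.eventually_iff_exists_mem] at hD
  obtain ⟨D, hD𝓤, hDE⟩ := hD
  -- symmetrize
  set D' := SetRel.symmetrize D with hD'def
  have hD'𝓤 : D' ∈ uniformity X := symmetrize_mem_uniformity hD𝓤
  -- find h with h•x ∈ V ∩ ball y D'
  have hWnhds : V ∩ UniformSpace.ball y D' ∈ nhds y :=
    Filter.inter_mem (hVopen.mem_nhds hyV) (UniformSpace.ball_mem_nhds y hD'𝓤)
  have hmeet := (mem_closure_iff_nhds.mp ((hmin x) y)) _ hWnhds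
  obtain ⟨z, ⟨hzV, hzball⟩, hzorb⟩ := hmeet
  obtain ⟨h, rfl⟩ := hzorb
  -- h • x ∈ V and h⁻¹ • y ∈ U
  have hinvU : h⁻¹ • y ∈ U := by
    apply hEball
    have : ((h⁻¹ • (h • x), h⁻¹ • y) : X × X) ∈ E :=
      hDE (h • x, y) hzball.2 h⁻¹
    simpa [UniformSpace.ball, inv_smul_smul] using this
  refine ⟨h, ?_⟩
  ext g
  simp only [Subgroup.mem_map, MulEquiv.coe_toMonoidHom, MulAut.conj_apply]
  constructor
  · intro hg
    refine ⟨h⁻¹ * g * h, ?_, by group⟩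
    have : g • (h • x) = h • x := hVtriv g hg _ hzV
    rw [MulAction.mem_stabilizer_iff]
    calc (h⁻¹ * g * h) • x = h⁻¹ • g • h • x := by rw [mul_smul, mul_smul]
    _ = h⁻¹ • h • x := by rw [this]
    _ = x := inv_smul_smul h x
  · rintro ⟨k, hk, rfl⟩
    rw [MulAction.mem_stabilizer_iff]
    have := hUtriv k hk _ hinvU
    calc (h * k * h⁻¹) • y = h • k • h⁻¹ • y := by rw [mul_smul, mul_smul]
    _ = h • h⁻¹ • y := by rw [this]
    _ = y := smul_inv_smul h y
end

section
/- Let {G_ℓ}_{ℓ≥0} be a descending chain of subgroups of a group G₀ with kernel K = ⋂_{ℓ≥0} G_ℓ. Suppose K is finitely generated and that every g ∈ K has trivial germinal holonomy, i.e. for every g ∈ K there exists an index i_g ≥ 0 such that h⁻¹ g h ∈ K for all h ∈ G_{i_g}. Then there exists an index ℓ_x ≥ 0 such that K is a normal subgroup of G_{ℓ_x}. -/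
/-!
Molino theory for matchbox manifolds (Dyer–Hurder–Lukina), Proposition 7.9:
if the kernel of a group chain is finitely generated and every element of the kernel
has trivial germinal holonomy, then the kernel is a normal subgroup of some `G_ℓ`.
-/

/-- **Proposition 7.9.** Let `{G_ℓ}_{ℓ ≥ 0}` be a descending chain of subgroups of a
group `G₀` with kernel `K = ⋂_ℓ G_ℓ`.  Suppose `K` is finitely generated, and every
`g ∈ K` has trivial germinal holonomy: there is an index `i_g` with `h⁻¹ g h ∈ K` for
all `h ∈ G_{i_g}`.  Then there is an index `ℓ_x` such that `K` is a normal subgroup of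
`G_{ℓ_x}`. -/
theorem kernel_normal_of_finitely_generated
    {G₀ : Type*} [Group G₀] (Gc : ℕ → Subgroup G₀)
    (hdesc : ∀ ℓ, Gc (ℓ + 1) ≤ Gc ℓ)
    (hfg : (⨅ ℓ : ℕ, Gc ℓ).FG)
    (hhol : ∀ g ∈ (⨅ ℓ : ℕ, Gc ℓ), ∃ i : ℕ,
      ∀ h ∈ Gc i, h⁻¹ * g * h ∈ (⨅ ℓ : ℕ, Gc ℓ)) :
    ∃ lx : ℕ, (⨅ ℓ : ℕ, Gc ℓ) ≤ Gc lx ∧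
      ∀ h ∈ Gc lx, ∀ g ∈ (⨅ ℓ : ℕ, Gc ℓ), h * g * h⁻¹ ∈ (⨅ ℓ : ℕ, Gc ℓ) := by
  set K := ⨅ ℓ : ℕ, Gc ℓ with hK
  have hmono : ∀ {a b : ℕ}, a ≤ b → Gc b ≤ Gc a := by
    intro a b hab
    induction hab with
    | refl => exact le_rfl
    | step _ ih => exact le_trans (hdesc _) ih
  obtain ⟨S, hS⟩ := hfg
  choose idx hidx using hhol
  have hSK : ∀ s ∈ S, s ∈ K := fun s hs => hS ▸ Subgroup.subset_closure hs
  let lx : ℕ := S.attach.sup fun s => idx s (hSK s s.2)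
  refine ⟨lx, iInf_le _ _, ?_⟩
  intro h hh g hg
  rw [← hS] at hg
  induction hg using Subgroup.closure_induction with
  | mem s hs =>
    have hle : idx s (hSK s hs) ≤ lx := Finset.le_sup (f := fun t : {x // x ∈ S} => idx t (hSK t t.2)) (Finset.mem_attach S ⟨s, hs⟩)
    have := hidx s (hSK s hs) h⁻¹ (inv_mem (hmono hle hh))
    simpa using this
  | one => simpa using one_mem K
  | mul a b _ _ ha hb =>
    have : (h * a * h⁻¹) * (h * b * h⁻¹) ∈ K := mul_mem ha hb
    simpa [mul_assoc] using this
  | inv a _ ha =>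
    have : (h * a * h⁻¹)⁻¹ ∈ K := inv_mem ha
    simpa [mul_assoc] using this
end

section
/- Let G₀ be a finitely generated group and let {G_ℓ}_{ℓ≥0} and {H_ℓ}_{ℓ≥0} be group chains in G₀ with H₀ = G₀. Let G_∞ = lim←{G₀/G_{ℓ+1} → G₀/G_ℓ} and H_∞ = lim←{G₀/H_{ℓ+1} → G₀/H_ℓ} with the left G₀-actions by coordinatewise multiplication. Then the chains {G_ℓ} and {H_ℓ} are equivalent if and only if there exists a G₀-equivariant homeomorphism τ : G_∞ → H_∞ with τ((e G_ℓ)_ℓ) = (e H_ℓ)_ℓ. -/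
/-!
Molino theory for matchbox manifolds (Dyer–Hurder–Lukina), Theorem 4.4(1)
(after Fokkink–Oversteegen): two group chains are equivalent if and only if there is a
basepoint-preserving equivariant homeomorphism of their inverse limits.
-/


variable {Γ : Type*} [Group Γ]

/-- Discrete topology on each coset space `Γ ⧸ H` (the coset spaces occurring below are
finite, since the subgroups have finite index). -/
instance cosetSpaceTopology (H : Subgroup Γ) : TopologicalSpace (Γ ⧸ H) := ⊥

/-- The natural map of coset spaces `Γ ⧸ H → Γ ⧸ K` for `H ≤ K`. -/
def cosetMap (H K : Subgroup Γ) (h : H ≤ K) : Γ ⧸ H → Γ ⧸ K :=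
  Quotient.map' id fun a b hab => by
    rw [QuotientGroup.leftRel_apply] at hab ⊢
    exact h hab

/-- The inverse limit `G_∞ = lim← Γ/G_ℓ` of the coset spaces of a group chain,
as the subspace of compatible sequences in `Π_ℓ Γ/G_ℓ`. -/
def InvLimSet (G : ℕ → Subgroup Γ) (hG : ∀ ℓ, G (ℓ + 1) ≤ G ℓ) :
    Set (∀ ℓ : ℕ, Γ ⧸ G ℓ) :=
  { x | ∀ ℓ, cosetMap (G (ℓ + 1)) (G ℓ) (hG ℓ) (x (ℓ + 1)) = x ℓ }

theorem cosetMap_smul (H K : Subgroup Γ) (h : H ≤ K) (g : Γ) (q : Γ ⧸ H) :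
    cosetMap H K h (g • q) = g • cosetMap H K h q := by
  induction q using Quotient.inductionOn' with
  | h a => rfl

/-- The coordinatewise left action of `Γ` on the inverse limit `lim← Γ/G_ℓ`. -/
def limSMul (G : ℕ → Subgroup Γ) (hG : ∀ ℓ, G (ℓ + 1) ≤ G ℓ) (g : Γ)
    (x : ↥(InvLimSet G hG)) : ↥(InvLimSet G hG) :=
  ⟨fun ℓ => g • x.1 ℓ, fun ℓ => by
    rw [cosetMap_smul, x.2 ℓ]⟩

/-- The basepoint `(e G_ℓ)_ℓ` of the inverse limit. -/
def basePt (G : ℕ → Subgroup Γ) (hG : ∀ ℓ, G (ℓ + 1) ≤ G ℓ) : ↥(InvLimSet G hG) :=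
  ⟨fun _ => QuotientGroup.mk 1, fun _ => rfl⟩

/-- Two group chains `{G_ℓ}` and `{H_ℓ}` are equivalent if they admit interleaved
subsequences: there are strictly increasing `(ℓ_k)`, `(j_k)` with
`G_{ℓ_0} ⊇ H_{j_0} ⊇ G_{ℓ_1} ⊇ H_{j_1} ⊇ ⋯`. -/
def ChainEquiv (G H : ℕ → Subgroup Γ) : Prop :=
  ∃ l j : ℕ → ℕ, StrictMono l ∧ StrictMono j ∧
    (∀ k, H (j k) ≤ G (l k)) ∧ (∀ k, G (l (k + 1)) ≤ H (j k))


instance (H : Subgroup Γ) : DiscreteTopology (Γ ⧸ H) := ⟨rfl⟩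

theorem cosetMap_comp' (A B C : Subgroup Γ) (h1 : A ≤ B) (h2 : B ≤ C) (q : Γ ⧸ A) :
    cosetMap B C h2 (cosetMap A B h1 q) = cosetMap A C (h1.trans h2) q := by
  induction q using Quotient.inductionOn' with
  | h a => rfl

theorem cosetMap_self' (A : Subgroup Γ) (h : A ≤ A) (q : Γ ⧸ A) : cosetMap A A h q = q := by
  induction q using Quotient.inductionOn' with
  | h a => rfl

theorem chainLe' {G : ℕ → Subgroup Γ} (hG : ∀ ℓ, G (ℓ + 1) ≤ G ℓ) {a b : ℕ} (h : a ≤ b) :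
    G b ≤ G a := by
  induction b, h using Nat.le_induction with
  | base => exact le_rfl
  | succ b hb ih => exact (hG b).trans ih

theorem invLim_compat' {G : ℕ → Subgroup Γ} {hG : ∀ ℓ, G (ℓ + 1) ≤ G ℓ}
    (x : ↥(InvLimSet G hG)) {a b : ℕ} (h : a ≤ b) :
    cosetMap (G b) (G a) (chainLe' hG h) (x.1 b) = x.1 a := by
  induction b, h using Nat.le_induction with
  | base => exact cosetMap_self' _ _ _
  | succ b hb ih =>
      rw [← ih, ← x.2 b, cosetMap_comp']

theorem limSMul_one' {G : ℕ → Subgroup Γ} (hG : ∀ ℓ, G (ℓ + 1) ≤ G ℓ)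
    (x : ↥(InvLimSet G hG)) : limSMul G hG 1 x = x :=
  Subtype.ext (funext fun ℓ => one_smul _ _)

/-- key lemma for the backward direction -/
theorem exists_dominating' {G H : ℕ → Subgroup Γ}
    (hGdesc : ∀ ℓ, G (ℓ + 1) ≤ G ℓ) (hHdesc : ∀ ℓ, H (ℓ + 1) ≤ H ℓ)
    (f : ↥(InvLimSet G hGdesc) → ↥(InvLimSet H hHdesc))
    (hfc : Continuous f)
    (hfb : ∀ g : Γ, f (limSMul G hGdesc g (basePt G hGdesc))
        = limSMul H hHdesc g (basePt H hHdesc))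
    (n : ℕ) : ∃ m, n < m ∧ G m ≤ H n := by
  set U : Set ↥(InvLimSet H hHdesc) :=
    (fun y : ↥(InvLimSet H hHdesc) => y.1 n) ⁻¹' {QuotientGroup.mk 1} with hUdef
  have hU : IsOpen U := by
    have hc : Continuous (fun y : ↥(InvLimSet H hHdesc) => y.1 n) :=
      (continuous_apply n).comp continuous_subtype_val
    exact (isOpen_discrete _).preimage hc
  have hS : IsOpen (f ⁻¹' U) := hU.preimage hfc
  obtain ⟨W, hWopen, hWeq⟩ := isOpen_induced_iff.mp hS
  have hbase : (basePt G hGdesc).1 ∈ W := by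
    have : basePt G hGdesc ∈ f ⁻¹' U := by
      have h1 := hfb 1
      rw [limSMul_one', limSMul_one'] at h1
      show f (basePt G hGdesc) ∈ U
      rw [h1]
      show (basePt H hHdesc).1 n ∈ ({QuotientGroup.mk 1} : Set (Γ ⧸ H n))
      rfl
    rw [← hWeq] at this
    exact this
  obtain ⟨I, u, hIu, hsub⟩ := isOpen_pi_iff.mp hWopen _ hbase
  refine ⟨max (I.sup id) n + 1, by omega, fun g hg => ?_⟩
  have hp : (limSMul G hGdesc g (basePt G hGdesc)).1 ∈ W := by
    apply hsub
    intro i hi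
    have hilem : i ≤ max (I.sup id) n + 1 := by
      have := Finset.le_sup (f := id) hi
      simp only [id] at this
      omega
    have hgi : g ∈ G i := chainLe' hGdesc hilem hg
    have : (limSMul G hGdesc g (basePt G hGdesc)).1 i = (basePt G hGdesc).1 i := by
      show g • (QuotientGroup.mk 1 : Γ ⧸ G i) = QuotientGroup.mk 1
      show (QuotientGroup.mk (g * 1) : Γ ⧸ G i) = QuotientGroup.mk 1
      exact QuotientGroup.eq.mpr (by simpa using (G i).inv_mem hgi)
    rw [this]
    exact (hIu i hi).2
  have hmem : limSMul G hGdesc g (basePt G hGdesc) ∈ f ⁻¹' U := by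
    rw [← hWeq]; exact hp
  have hmk : (limSMul H hHdesc g (basePt H hHdesc)).1 n = QuotientGroup.mk 1 := by
    rw [← hfb g]; exact hmem
  have : (QuotientGroup.mk (g * 1) : Γ ⧸ H n) = QuotientGroup.mk 1 := hmk
  have := QuotientGroup.eq.mp this
  simpa using (H n).inv_mem this

/-- **Theorem 4.4(1).** Let `G₀` be a finitely generated group and `{G_ℓ}`, `{H_ℓ}` group
chains in `G₀` with `G_0 = H_0 = G₀`.  Then the chains are equivalent if and only if there
is a `G₀`-equivariant homeomorphism `τ : G_∞ → H_∞` with `τ((e G_ℓ)_ℓ) = (e H_ℓ)_ℓ`. -/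
theorem chain_equiv_iff_pointed_equivariant_homeo
    {Γ : Type*} [Group Γ] (hfg : Group.FG Γ)
    (G H : ℕ → Subgroup Γ)
    (hGdesc : ∀ ℓ, G (ℓ + 1) ≤ G ℓ) (hHdesc : ∀ ℓ, H (ℓ + 1) ≤ H ℓ)
    (hGfi : ∀ ℓ, (G ℓ).FiniteIndex) (hHfi : ∀ ℓ, (H ℓ).FiniteIndex)
    (hG0 : G 0 = ⊤) (hH0 : H 0 = ⊤) :
    ChainEquiv G H ↔
      ∃ τ : ↥(InvLimSet G hGdesc) ≃ₜ ↥(InvLimSet H hHdesc),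
        (∀ (g : Γ) (x : ↥(InvLimSet G hGdesc)),
          τ (limSMul G hGdesc g x) = limSMul H hHdesc g (τ x)) ∧
        τ (basePt G hGdesc) = basePt H hHdesc := by
  constructor
  · rintro ⟨l, j, hl, hj, hHG, hGH⟩
    have hfle : ∀ ℓ : ℕ, G (l (ℓ + 1)) ≤ H ℓ :=
      fun ℓ => (hGH ℓ).trans (chainLe' hHdesc hj.le_apply)
    have hgle : ∀ ℓ : ℕ, H (j ℓ) ≤ G ℓ :=
      fun ℓ => (hHG ℓ).trans (chainLe' hGdesc hl.le_apply)
    let f : ↥(InvLimSet G hGdesc) → ↥(InvLimSet H hHdesc) := fun x =>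
      ⟨fun ℓ => cosetMap _ _ (hfle ℓ) (x.1 (l (ℓ + 1))), fun ℓ => by
        show _ = cosetMap (G (l (ℓ + 1))) (H ℓ) (hfle ℓ) (x.1 (l (ℓ + 1)))
        rw [cosetMap_comp',
          ← invLim_compat' x (show l (ℓ + 1) ≤ l (ℓ + 1 + 1) from hl.monotone (by omega)),
          cosetMap_comp']⟩
    let g : ↥(InvLimSet H hHdesc) → ↥(InvLimSet G hGdesc) := fun y =>
      ⟨fun ℓ => cosetMap _ _ (hgle ℓ) (y.1 (j ℓ)), fun ℓ => by
        show _ = cosetMap (H (j ℓ)) (G ℓ) (hgle ℓ) (y.1 (j ℓ))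
        rw [cosetMap_comp',
          ← invLim_compat' y (show j ℓ ≤ j (ℓ + 1) from hj.monotone (by omega)),
          cosetMap_comp']⟩
    have hgf : ∀ x, g (f x) = x := by
      intro x
      apply Subtype.ext
      funext ℓ
      show cosetMap (H (j ℓ)) (G ℓ) (hgle ℓ)
        (cosetMap (G (l (j ℓ + 1))) (H (j ℓ)) (hfle (j ℓ)) (x.1 (l (j ℓ + 1)))) = x.1 ℓ
      rw [cosetMap_comp']
      exact invLim_compat' x (le_trans hj.le_apply (le_trans (by omega) hl.le_apply))
    have hfg' : ∀ y, f (g y) = y := by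
      intro y
      apply Subtype.ext
      funext ℓ
      show cosetMap (G (l (ℓ + 1))) (H ℓ) (hfle ℓ)
        (cosetMap (H (j (l (ℓ + 1)))) (G (l (ℓ + 1))) (hgle (l (ℓ + 1)))
          (y.1 (j (l (ℓ + 1))))) = y.1 ℓ
      rw [cosetMap_comp']
      exact invLim_compat' y (le_trans (le_trans (by omega : ℓ ≤ ℓ + 1) hl.le_apply)
        hj.le_apply)
    have hfc : Continuous f := by
      apply Continuous.subtype_mk
      apply continuous_pi
      intro ℓ
      exact continuous_of_discreteTopology.comp
        ((continuous_apply (l (ℓ + 1))).comp continuous_subtype_val)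
    have hgc : Continuous g := by
      apply Continuous.subtype_mk
      apply continuous_pi
      intro ℓ
      exact continuous_of_discreteTopology.comp
        ((continuous_apply (j ℓ)).comp continuous_subtype_val)
    refine ⟨⟨⟨f, g, hgf, hfg'⟩, hfc, hgc⟩, ?_, ?_⟩
    · intro a x
      apply Subtype.ext
      funext ℓ
      exact cosetMap_smul _ _ (hfle ℓ) a (x.1 (l (ℓ + 1)))
    · apply Subtype.ext
      funext ℓ
      rfl
  · rintro ⟨τ, hequiv, hbase⟩
    have hsymm_base : τ.symm (basePt H hHdesc) = basePt G hGdesc := by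
      rw [← hbase]; exact τ.symm_apply_apply _
    have hsymm_equiv : ∀ (g : Γ) (y : ↥(InvLimSet H hHdesc)),
        τ.symm (limSMul H hHdesc g y) = limSMul G hGdesc g (τ.symm y) := by
      intro g y
      apply τ.injective
      rw [τ.apply_symm_apply, hequiv, τ.apply_symm_apply]
    choose φ hφlt hφle using exists_dominating' hGdesc hHdesc τ τ.continuous
      (fun g => by rw [hequiv, hbase])
    choose ψ hψlt hψle using exists_dominating' hHdesc hGdesc τ.symm τ.symm.continuous
      (fun g => by rw [hsymm_equiv, hsymm_base])
    let l : ℕ → ℕ := fun k => Nat.rec 0 (fun _ p => φ (ψ p)) k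
    refine ⟨l, fun k => ψ (l k), ?_, ?_, fun k => hψle (l k), fun k => hφle (ψ (l k))⟩
    · apply strictMono_nat_of_lt_succ
      intro k
      exact lt_trans (hψlt (l k)) (hφlt (ψ (l k)))
    · apply strictMono_nat_of_lt_succ
      intro k
      have h1 : ψ (l k) < l (k + 1) := hφlt (ψ (l k))
      exact lt_trans h1 (hψlt (l (k + 1)))
end

section
/- Let {G_ℓ}_{ℓ≥0} be a group chain in a group G₀ with kernel K = ⋂_{ℓ≥0} G_ℓ, let X_∞ = lim← G₀/G_ℓ with basepoint x = (e G_ℓ)_ℓ and the left G₀-action, and for i ≥ 0 let U(x,i) = {(g_ℓ G_ℓ) ∈ X_∞ : g_ℓ G_ℓ = G_ℓ for all ℓ ≤ i} be the cylinder neighborhood of x. Then for every g ∈ K and i ≥ 0: g acts as the identity on U(x,i) if and only if h⁻¹ g h ∈ K for all h ∈ G_i. Consequently, g ∈ K has trivial germinal holonomy at x (i.e. acts as the identity on some cylinder neighborhood U(x,i)) if and only if there exists i_g ≥ 0 such that h⁻¹ g h ∈ K for all h ∈ G_{i_g}. -/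
/-!
Molino theory for matchbox manifolds (Dyer–Hurder–Lukina), Lemma 7.5
(after [DHL2016b, Lemma 5.3]): an element `g` of the kernel of a group chain acts as the
identity on the cylinder neighborhood `U(x,i)` of the basepoint if and only if
`h⁻¹ g h ∈ K` for all `h ∈ G_i`.
-/


variable {Γ : Type*} [Group Γ]

lemma gc_antitone {Γ : Type*} [Group Γ] (Gc : ℕ → Subgroup Γ)
    (hdesc : ∀ ℓ, Gc (ℓ + 1) ≤ Gc ℓ) : Antitone Gc :=
  antitone_nat_of_succ_le hdesc

lemma rep_mem {Γ : Type*} [Group Γ] (Gc : ℕ → Subgroup Γ)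
    (hdesc : ∀ ℓ, Gc (ℓ + 1) ≤ Gc ℓ) (y : ↥(InvLimSet Gc hdesc)) (i : ℕ)
    (hyi : y.1 i = (QuotientGroup.mk 1 : Γ ⧸ Gc i)) :
    ∀ ℓ, i ≤ ℓ → ∀ h : Γ, y.1 ℓ = QuotientGroup.mk h → h ∈ Gc i := by
  intro ℓ hℓ
  induction ℓ, hℓ using Nat.le_induction with
  | base =>
    intro h hh
    rw [hyi] at hh
    have := (QuotientGroup.eq (s := Gc i)).mp hh.symm
    simpa using this
  | succ n hn ih =>
    intro h hh
    apply ih h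
    have := y.2 n
    rw [← this, hh]
    rfl

theorem identity_on_cylinder_iff_aux
    {Γ : Type*} [Group Γ] (Gc : ℕ → Subgroup Γ)
    (hdesc : ∀ ℓ, Gc (ℓ + 1) ≤ Gc ℓ)
    (g : Γ) (hg : g ∈ (⨅ ℓ : ℕ, Gc ℓ)) (i : ℕ) :
    ((∀ y : ↥(InvLimSet Gc hdesc),
        (∀ ℓ, ℓ ≤ i → y.1 ℓ = (QuotientGroup.mk 1 : Γ ⧸ Gc ℓ)) →
        limSMul Gc hdesc g y = y) ↔
      ∀ h ∈ Gc i, h⁻¹ * g * h ∈ (⨅ ℓ : ℕ, Gc ℓ)) := by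
  have hgK : ∀ ℓ, g ∈ Gc ℓ := fun ℓ => (Subgroup.mem_iInf.mp hg) ℓ
  constructor
  · intro H h hh
    -- use the constant sequence y = (h G_ℓ)
    set y : ↥(InvLimSet Gc hdesc) :=
      ⟨fun ℓ => QuotientGroup.mk h, fun ℓ => rfl⟩ with hy
    have hU : ∀ ℓ, ℓ ≤ i → y.1 ℓ = (QuotientGroup.mk 1 : Γ ⧸ Gc ℓ) := by
      intro ℓ hℓ
      have : h ∈ Gc ℓ := gc_antitone Gc hdesc hℓ hh
      simp only [hy]
      rw [QuotientGroup.eq]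
      simpa using this
    have := congrArg Subtype.val (H y hU)
    rw [Subgroup.mem_iInf]
    intro ℓ
    have := congrFun this ℓ
    simp only [limSMul, hy] at this
    have : QuotientGroup.mk (g * h) = (QuotientGroup.mk h : Γ ⧸ Gc ℓ) := this
    have := (QuotientGroup.eq (s := Gc ℓ)).mp this
    have h2 : (g * h)⁻¹ * h ∈ Gc ℓ := this
    have : ((g * h)⁻¹ * h)⁻¹ ∈ Gc ℓ := (Gc ℓ).inv_mem h2
    simpa [mul_assoc] using this
  · intro H y hU
    apply Subtype.ext
    funext ℓ
    show g • y.1 ℓ = y.1 ℓ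
    rcases le_total ℓ i with hℓ | hℓ
    · rw [hU ℓ hℓ]
      show QuotientGroup.mk (g * 1) = _
      rw [QuotientGroup.eq]
      simpa using (Gc ℓ).inv_mem (hgK ℓ)
    · obtain ⟨h, hh⟩ := QuotientGroup.mk_surjective (y.1 ℓ)
      have hhGi : h ∈ Gc i := rep_mem Gc hdesc y i (hU i le_rfl) ℓ hℓ h hh.symm
      have hK : h⁻¹ * g * h ∈ Gc ℓ := (Subgroup.mem_iInf.mp (H h hhGi)) ℓ
      rw [← hh]
      show QuotientGroup.mk (g * h) = _
      rw [QuotientGroup.eq]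
      have : (h⁻¹ * g * h)⁻¹ ∈ Gc ℓ := (Gc ℓ).inv_mem hK
      simpa [mul_assoc] using this

/-- **Lemma 7.5.** Let `{G_ℓ}` be a group chain in `G₀` with kernel `K = ⋂_ℓ G_ℓ`, let
`X_∞ = lim← G₀/G_ℓ` with basepoint `x = (e G_ℓ)_ℓ`, and let
`U(x,i) = {(g_ℓ G_ℓ) ∈ X_∞ : g_ℓ G_ℓ = G_ℓ for ℓ ≤ i}`.  For `g ∈ K` and `i ≥ 0`:
`g` acts as the identity on `U(x,i)` iff `h⁻¹ g h ∈ K` for all `h ∈ G_i`.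
Consequently `g` has trivial germinal holonomy at `x` (acts as the identity on some
cylinder neighborhood) iff there is `i_g` with `h⁻¹ g h ∈ K` for all `h ∈ G_{i_g}`. -/
theorem identity_on_cylinder_iff
    {Γ : Type*} [Group Γ] (Gc : ℕ → Subgroup Γ)
    (hdesc : ∀ ℓ, Gc (ℓ + 1) ≤ Gc ℓ)
    (hfi : ∀ ℓ, (Gc ℓ).FiniteIndex) (hG0 : Gc 0 = ⊤)
    (g : Γ) (hg : g ∈ (⨅ ℓ : ℕ, Gc ℓ)) :
    (∀ i : ℕ,
      ((∀ y : ↥(InvLimSet Gc hdesc),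
          (∀ ℓ, ℓ ≤ i → y.1 ℓ = (QuotientGroup.mk 1 : Γ ⧸ Gc ℓ)) →
          limSMul Gc hdesc g y = y) ↔
        ∀ h ∈ Gc i, h⁻¹ * g * h ∈ (⨅ ℓ : ℕ, Gc ℓ))) ∧
    ((∃ i : ℕ, ∀ y : ↥(InvLimSet Gc hdesc),
          (∀ ℓ, ℓ ≤ i → y.1 ℓ = (QuotientGroup.mk 1 : Γ ⧸ Gc ℓ)) →
          limSMul Gc hdesc g y = y) ↔
      ∃ i : ℕ, ∀ h ∈ Gc i, h⁻¹ * g * h ∈ (⨅ ℓ : ℕ, Gc ℓ)) := by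
  constructor
  · intro i; exact identity_on_cylinder_iff_aux Gc hdesc g hg i
  · exact exists_congr fun i => identity_on_cylinder_iff_aux Gc hdesc g hg i
end
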